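/- arXiv:1506.08382 — 3 statements merged into one kernel-verified Lean document; each statement's English description precedes it below -/
import Mathlib

section
/- For any positive integers n, p, and q, ∑_{j_1+⋯+j_p=n} (n choose j_1,…,j_p) ∏_{t=1}^p q·(j_t p + q)^{j_t - 1} = ∑_{i_1+⋯+i_q=n} (n choose i_1,…,i_q) p^n ∏_{t=1}^q (i_t + 1)^{i_t - 1}, where the first sum ranges over all p-tuples of nonnegative integers summing to n, the second sum ranges over all q-tuples of nonnegative integers summing to n, (n choose a_1,…,a_r) denotes the multinomial coefficient, and each factor of the form x^{a-1} with a = 0 is interpreted as x^{-1} (equivalently, q·(0·p+q)^{-1} = 1 and (0+1)^{-1} = 1). -/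
noncomputable def abelF (k : ℕ) (x : ℝ) : ℝ := if k = 0 then 1 else x * (x + k) ^ (k - 1)

@[simp] lemma abelF_zero (x : ℝ) : abelF 0 x = 1 := rfl

lemma abelF_succ (k : ℕ) (x : ℝ) : abelF (k+1) x = x * (x + (k+1)) ^ k := by
  simp [abelF]

lemma abelF_at_zero (k : ℕ) (hk : k ≠ 0) : abelF k 0 = 0 := by
  cases k with
  | zero => exact absurd rfl hk
  | succ l => simp [abelF_succ]

lemma hasDerivAt_abelF (k : ℕ) (x : ℝ) :
    HasDerivAt (fun z => abelF k z) ((k : ℝ) * abelF (k-1) (x+1)) x := by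
  match k with
  | 0 => simpa using hasDerivAt_const x (1:ℝ)
  | 1 =>
    have : (fun z : ℝ => abelF 1 z) = fun z => z * 1 := by
      funext z; simp [abelF_succ]
    rw [this]
    simpa using (hasDerivAt_id x).mul_const (1:ℝ)
  | (l+2) =>
    have h1 : HasDerivAt (fun z : ℝ => z) 1 x := hasDerivAt_id x
    have h2 : HasDerivAt (fun z : ℝ => (z + ((l:ℝ)+2)) ^ (l+1))
        ((↑(l+1) : ℕ) * (x + ((l:ℝ)+2)) ^ l * 1) x := by
      exact (HasDerivAt.fun_pow ((hasDerivAt_id x).add_const ((l:ℝ)+2)) (l+1))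
    have h3 := h1.fun_mul h2
    have : (fun z : ℝ => z * (z + ((l:ℝ)+2)) ^ (l+1)) = fun z => abelF (l+2) z := by
      funext z; rw [abelF_succ]; push_cast; ring_nf
    rw [this] at h3
    refine h3.congr_deriv (Eq.symm ?_)
    show ((l+2:ℕ):ℝ) * abelF (l+1) (x+1) = 1 * (x + ((l:ℝ) + 2)) ^ (l + 1) + x * (((l+1:ℕ):ℝ) * (x + ((l:ℝ) + 2)) ^ l * 1)
    rw [abelF_succ]
    push_cast
    rw [pow_succ]
    ring

lemma abel2 (n : ℕ) : ∀ x y : ℝ,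
    ∑ k ∈ Finset.range (n+1), (n.choose k : ℝ) * abelF k x * abelF (n-k) y
      = abelF n (x+y) := by
  induction n with
  | zero => intro x y; simp
  | succ m IH =>
    intro x y
    -- derivative of LHS and RHS as functions of x agree
    have key : ∀ x : ℝ,
        HasDerivAt (fun z => ∑ k ∈ Finset.range (m+2),
            ((m+1).choose k : ℝ) * abelF k z * abelF (m+1-k) y
          - abelF (m+1) (z+y)) 0 x := by
      intro x
      have hL : HasDerivAt (fun z => ∑ k ∈ Finset.range (m+2),
          ((m+1).choose k : ℝ) * abelF k z * abelF (m+1-k) y)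
          (∑ k ∈ Finset.range (m+2),
            ((m+1).choose k : ℝ) * ((k:ℝ) * abelF (k-1) (x+1)) * abelF (m+1-k) y) x := by
        apply HasDerivAt.fun_sum
        intro k _
        exact (((hasDerivAt_abelF k x).const_mul (((m+1).choose k : ℝ))).mul_const
          (abelF (m+1-k) y))
      have hR : HasDerivAt (fun z : ℝ => abelF (m+1) (z+y))
          (((m+1:ℕ) : ℝ) * abelF m (x+y+1)) x := by
        have := (hasDerivAt_abelF (m+1) (x+y)).comp x ((hasDerivAt_id x).add_const y)
        simpa [Function.comp_def] using this
      have hsum : ∑ k ∈ Finset.range (m+2),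
            ((m+1).choose k : ℝ) * ((k:ℝ) * abelF (k-1) (x+1)) * abelF (m+1-k) y
          = ((m+1:ℕ) : ℝ) * abelF m (x+y+1) := by
        rw [Finset.sum_range_succ']
        simp only [Nat.cast_zero, zero_mul, mul_zero, zero_mul, add_zero]
        have : ∀ l ∈ Finset.range (m+1),
            ((m+1).choose (l+1) : ℝ) * (((l+1:ℕ):ℝ) * abelF l (x+1)) * abelF (m+1-(l+1)) y
              = ((m+1:ℕ):ℝ) * ((m.choose l : ℝ) * abelF l (x+1) * abelF (m-l) y) := by
          intro l _
          have hc : (m+1).choose (l+1) * (l+1) = (m+1) * m.choose l := by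
            rw [← Nat.add_one_mul_choose_eq]
          have hc' : ((m+1).choose (l+1) : ℝ) * ((l+1:ℕ):ℝ) = ((m+1:ℕ):ℝ) * (m.choose l : ℝ) := by
            exact_mod_cast hc
          have : m + 1 - (l + 1) = m - l := by omega
          rw [this]
          calc ((m+1).choose (l+1) : ℝ) * (((l+1:ℕ):ℝ) * abelF l (x+1)) * abelF (m-l) y
              = (((m+1).choose (l+1) : ℝ) * ((l+1:ℕ):ℝ)) * abelF l (x+1) * abelF (m-l) y := by ring
            _ = ((m+1:ℕ):ℝ) * ((m.choose l : ℝ) * abelF l (x+1) * abelF (m-l) y) := by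
                rw [hc']; ring
        simp only [Nat.add_sub_cancel]
        rw [Finset.sum_congr rfl this, ← Finset.mul_sum, IH (x+1) y]
        have : x + 1 + y = x + y + 1 := by ring
        rw [this]
      rw [hsum] at hL
      simpa using hL.fun_sub hR
    have hdiff : Differentiable ℝ (fun z => ∑ k ∈ Finset.range (m+2),
        ((m+1).choose k : ℝ) * abelF k z * abelF (m+1-k) y - abelF (m+1) (z+y)) :=
      fun z => (key z).differentiableAt
    have hconst := is_const_of_deriv_eq_zero hdiff (fun z => (key z).deriv) x 0
    have hzero : ∑ k ∈ Finset.range (m+2),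
          ((m+1).choose k : ℝ) * abelF k 0 * abelF (m+1-k) y - abelF (m+1) (0+y) = 0 := by
      rw [Finset.sum_eq_single 0]
      · simp
      · intro k _ hk
        rw [abelF_at_zero k hk]; ring
      · intro h; simp at h
    have := hconst.trans hzero
    linarith [this]

lemma sum_adT_succ {M : Type*} [AddCommMonoid M] (k n : ℕ) (F : (Fin (k+1) → ℕ) → M) :
    ∑ j ∈ Finset.Nat.antidiagonalTuple (k+1) n, F j
      = ∑ ab ∈ Finset.HasAntidiagonal.antidiagonal n,
          ∑ x ∈ Finset.Nat.antidiagonalTuple k ab.2, F (Fin.cons ab.1 x) := by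
  rw [Finset.sum_sigma']
  refine Finset.sum_nbij'
    (i := fun (j : Fin (k+1) → ℕ) =>
      (⟨(j 0, ∑ i : Fin k, j i.succ), Fin.tail j⟩ : (_ : ℕ × ℕ) × (Fin k → ℕ)))
    (j := fun s => Fin.cons s.1.1 s.2) ?_ ?_ ?_ ?_ ?_
  · intro j hj
    rw [Finset.Nat.mem_antidiagonalTuple] at hj
    rw [Finset.mem_sigma]
    constructor
    · rw [Finset.HasAntidiagonal.mem_antidiagonal]
      rw [← hj, Fin.sum_univ_succ]
    · exact Finset.Nat.mem_antidiagonalTuple.mpr rfl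
  · intro s hs
    rw [Finset.mem_sigma] at hs
    obtain ⟨h1, h2⟩ := hs
    rw [Finset.HasAntidiagonal.mem_antidiagonal] at h1
    rw [Finset.Nat.mem_antidiagonalTuple] at h2 ⊢
    rw [Fin.sum_univ_succ]
    simp only [Fin.cons_zero, Fin.cons_succ]
    rw [h2, h1]
  · intro j hj
    exact Fin.cons_self_tail j
  · intro s hs
    rw [Finset.mem_sigma] at hs
    obtain ⟨h1, h2⟩ := hs
    rw [Finset.Nat.mem_antidiagonalTuple] at h2
    apply Sigma.ext
    · simp only [Fin.cons_zero, Fin.cons_succ]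
      rw [h2]
    · simp [Fin.tail, Fin.cons_succ, Fin.cons_zero, h2]
  · intro j hj
    congr 1
    exact (Fin.cons_self_tail j).symm

lemma multinomial_cons_fin (k : ℕ) (a : ℕ) (x : Fin k → ℕ) :
    Nat.multinomial Finset.univ (Fin.cons a x : Fin (k+1) → ℕ)
      = (a + ∑ i, x i).choose a * Nat.multinomial Finset.univ x := by
  rw [Fin.univ_succ, Nat.multinomial_cons]
  simp only [Fin.cons_zero]
  congr 1
  · congr 1
    rw [Finset.sum_map]
    simp [Fin.cons_succ]
  · unfold Nat.multinomial
    rw [Finset.sum_map, Finset.prod_map]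
    simp [Fin.cons_succ]

lemma multi_abel (k : ℕ) : ∀ (n : ℕ) (x : ℝ),
    ∑ j ∈ Finset.Nat.antidiagonalTuple k n,
      (Nat.multinomial Finset.univ j : ℝ) * ∏ t, abelF (j t) x
      = abelF n ((k : ℝ) * x) := by
  induction k with
  | zero =>
    intro n x
    cases n with
    | zero => simp [abelF]
    | succ m => simp [abelF_at_zero]
  | succ k IH =>
    intro n x
    rw [sum_adT_succ]
    have step : ∀ ab ∈ Finset.HasAntidiagonal.antidiagonal n,
        ∑ y ∈ Finset.Nat.antidiagonalTuple k ab.2,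
          (Nat.multinomial Finset.univ (Fin.cons ab.1 y : Fin (k+1) → ℕ) : ℝ) *
            ∏ t, abelF ((Fin.cons ab.1 y : Fin (k+1) → ℕ) t) x
        = (n.choose ab.1 : ℝ) * abelF ab.1 x * abelF ab.2 ((k:ℝ) * x) := by
      intro ab hab
      rw [Finset.HasAntidiagonal.mem_antidiagonal] at hab
      have : ∀ y ∈ Finset.Nat.antidiagonalTuple k ab.2,
          (Nat.multinomial Finset.univ (Fin.cons ab.1 y : Fin (k+1) → ℕ) : ℝ) *
            ∏ t, abelF ((Fin.cons ab.1 y : Fin (k+1) → ℕ) t) x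
          = (n.choose ab.1 : ℝ) * abelF ab.1 x *
              ((Nat.multinomial Finset.univ y : ℝ) * ∏ t, abelF (y t) x) := by
        intro y hy
        rw [Finset.Nat.mem_antidiagonalTuple] at hy
        rw [multinomial_cons_fin, hy, hab, Fin.prod_univ_succ]
        simp only [Fin.cons_zero, Fin.cons_succ]
        push_cast
        ring
      rw [Finset.sum_congr rfl this, ← Finset.mul_sum, IH ab.2 x]
    rw [Finset.sum_congr rfl step, Finset.Nat.sum_antidiagonal_eq_sum_range_succ_mk,
      abel2 n x ((k:ℝ)*x)]
    push_cast
    ring_nf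

lemma lhs_factor (p q j : ℕ) (hp : 0 < p) (hq : 0 < q) :
    (q : ℝ) * ((j : ℝ) * p + q) ^ ((j : ℤ) - 1)
      = (p : ℝ) ^ j * abelF j ((q : ℝ) / p) := by
  have hp' : (p : ℝ) ≠ 0 := Nat.cast_ne_zero.mpr hp.ne'
  have hq' : (q : ℝ) ≠ 0 := Nat.cast_ne_zero.mpr hq.ne'
  cases j with
  | zero =>
    simp [zpow_neg, hq']
  | succ l =>
    have : ((l+1 : ℕ) : ℤ) - 1 = (l : ℤ) := by push_cast; ring
    rw [this, zpow_natCast, abelF_succ]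
    push_cast
    rw [mul_comm ((p:ℝ)^(l+1))]
    rw [pow_succ]
    have : ((l:ℝ)+1) * p + q = p * ((q:ℝ)/p + ((l:ℝ)+1)) := by
      field_simp
      ring
    rw [this, mul_pow]
    field_simp

lemma rhs_factor (i : ℕ) : ((i : ℝ) + 1) ^ ((i : ℤ) - 1) = abelF i 1 := by
  cases i with
  | zero => simp
  | succ l =>
    have : ((l+1 : ℕ) : ℤ) - 1 = (l : ℤ) := by push_cast; ring
    rw [this, zpow_natCast, abelF_succ]
    push_cast
    ring_nf

theorem multinomial_pq_identity (n p q : ℕ) (hn : 0 < n) (hp : 0 < p) (hq : 0 < q) :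
    ∑ j ∈ Finset.Nat.antidiagonalTuple p n,
      (Nat.multinomial Finset.univ j : ℝ) *
        ∏ t, (q : ℝ) * ((j t : ℝ) * p + q) ^ ((j t : ℤ) - 1)
      = ∑ i ∈ Finset.Nat.antidiagonalTuple q n,
        (Nat.multinomial Finset.univ i : ℝ) * (p : ℝ) ^ n *
          ∏ t, ((i t : ℝ) + 1) ^ ((i t : ℤ) - 1) := by
  have hL : ∀ j ∈ Finset.Nat.antidiagonalTuple p n,
      (Nat.multinomial Finset.univ j : ℝ) *
        ∏ t, (q : ℝ) * ((j t : ℝ) * p + q) ^ ((j t : ℤ) - 1)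
      = (p:ℝ)^n * ((Nat.multinomial Finset.univ j : ℝ) * ∏ t, abelF (j t) ((q:ℝ)/p)) := by
    intro j hj
    rw [Finset.Nat.mem_antidiagonalTuple] at hj
    have : ∏ t, (q : ℝ) * ((j t : ℝ) * p + q) ^ ((j t : ℤ) - 1)
        = ∏ t, ((p:ℝ)^(j t) * abelF (j t) ((q:ℝ)/p)) := by
      apply Finset.prod_congr rfl
      intro t _
      exact lhs_factor p q (j t) hp hq
    rw [this, Finset.prod_mul_distrib, Finset.prod_pow_eq_pow_sum, hj]
    ring
  have hR : ∀ i ∈ Finset.Nat.antidiagonalTuple q n,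
      (Nat.multinomial Finset.univ i : ℝ) * (p : ℝ) ^ n *
          ∏ t, ((i t : ℝ) + 1) ^ ((i t : ℤ) - 1)
      = (p:ℝ)^n * ((Nat.multinomial Finset.univ i : ℝ) * ∏ t, abelF (i t) 1) := by
    intro i _
    have : ∏ t, ((i t : ℝ) + 1) ^ ((i t : ℤ) - 1) = ∏ t, abelF (i t) 1 := by
      apply Finset.prod_congr rfl
      intro t _
      exact rhs_factor (i t)
    rw [this]
    ring
  rw [Finset.sum_congr rfl hL, Finset.sum_congr rfl hR, ← Finset.mul_sum, ← Finset.mul_sum,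
    multi_abel p n ((q:ℝ)/p), multi_abel q n 1]
  have hp' : (p : ℝ) ≠ 0 := Nat.cast_ne_zero.mpr hp.ne'
  have h1 : (p:ℝ) * ((q:ℝ)/p) = (q:ℝ) := by field_simp
  have h2 : (q:ℝ) * 1 = (q:ℝ) := by ring
  rw [h1, h2]
end

section
/- For every positive integer m and every positive real number c, f(m,c) satisfies the functional equation f(m,c) = e^{-c(1 - f(m,c)^m)/m}; equivalently, f(m,c)^m = e^{-c(1 - f(m,c)^m)}. -/
open Finset

set_option maxHeartbeats 1000000


lemma alt_pascal (g : ℕ → ℝ) (n : ℕ) :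
    ∑ k ∈ range (n + 2), (-1 : ℝ) ^ k * ((n+1).choose k : ℝ) * g k
      = ∑ k ∈ range (n + 1), (-1 : ℝ) ^ k * (n.choose k : ℝ) * (g k - g (k+1)) := by
  rw [Finset.sum_range_succ' (fun k => (-1 : ℝ) ^ k * ((n+1).choose k : ℝ) * g k)]
  have h2 : ∑ k ∈ range (n + 1), (-1 : ℝ) ^ k * (n.choose k : ℝ) * g k
      = (∑ k ∈ range (n + 1), (-1 : ℝ) ^ (k+1) * (n.choose (k+1) : ℝ) * g (k+1)) + g 0 := by
    rw [Finset.sum_range_succ' (fun k => (-1 : ℝ) ^ k * (n.choose k : ℝ) * g k)]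
    rw [Finset.sum_range_succ (fun k => (-1 : ℝ) ^ (k+1) * (n.choose (k+1) : ℝ) * g (k+1))]
    simp
  simp only [mul_sub, Finset.sum_sub_distrib, h2, Nat.choose_succ_succ]
  have h3 : ∀ x : ℕ, (-1:ℝ)^(x+1) * ((n.choose x : ℝ) + (n.choose (x+1) : ℝ)) * g (x+1)
      = (-1:ℝ)^(x+1) * (n.choose (x+1) : ℝ) * g (x+1)
        + (-((-1:ℝ)^x * (n.choose x : ℝ) * g (x+1))) := by
    intro x; ring
  push_cast
  simp only [Nat.succ_eq_add_one, h3, Finset.sum_add_distrib, Finset.sum_neg_distrib]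
  have : (1 + n) = (n + 1) := by ring
  simp [this]
  abel

lemma finite_diff : ∀ n : ℕ, ∀ j : ℕ, j < n → ∀ a b : ℝ,
    ∑ k ∈ range (n + 1), (-1 : ℝ) ^ k * (n.choose k : ℝ) * (a + b * k) ^ j = 0 := by
  intro n
  induction n with
  | zero => intro j hj; omega
  | succ n ih =>
    intro j hj a b
    rw [show n + 1 + 1 = n + 2 from rfl, alt_pascal (fun k => (a + b * k) ^ j) n]
    have hdiff : ∀ k : ℕ, (a + b * k) ^ j - (a + b * (k+1:ℕ)) ^ j
        = -∑ i ∈ range j, (a + b * k) ^ i * b ^ (j - i) * (j.choose i : ℝ) := by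
      intro k
      have hexp : (a + b * (k+1:ℕ)) ^ j = ((a + b * k) + b) ^ j := by push_cast; ring_nf
      have hpow : ((a + b * k) + b) ^ j
          = ∑ i ∈ range (j+1), (a + b * k) ^ i * b ^ (j - i) * (j.choose i : ℝ) := add_pow _ _ _
      rw [hexp, hpow, Finset.sum_range_succ]
      simp
    simp only [hdiff]
    have hswap : ∑ k ∈ range (n + 1), (-1 : ℝ) ^ k * (n.choose k : ℝ) *
        -(∑ i ∈ range j, (a + b * k) ^ i * b ^ (j - i) * (j.choose i : ℝ))
        = -∑ i ∈ range j, (b ^ (j - i) * (j.choose i : ℝ)) *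
            ∑ k ∈ range (n + 1), (-1 : ℝ) ^ k * (n.choose k : ℝ) * (a + b * k) ^ i := by
      rw [← Finset.sum_neg_distrib]
      simp only [Finset.mul_sum, Finset.sum_mul, ← Finset.sum_neg_distrib]
      rw [Finset.sum_comm]
      congr 1; ext i; congr 1; ext k; ring
    rw [hswap]
    have : ∀ i ∈ range j, (b ^ (j - i) * (j.choose i : ℝ)) *
        ∑ k ∈ range (n + 1), (-1 : ℝ) ^ k * (n.choose k : ℝ) * (a + b * k) ^ i = 0 := by
      intro i hi
      have hi' := Finset.mem_range.mp hi
      rw [ih i (by omega) a b, mul_zero]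
    rw [Finset.sum_congr rfl this]
    simp

noncomputable def Bz (μ x : ℝ) (k : ℕ) : ℝ := x * (x + μ * k) ^ ((k : ℤ) - 1)

lemma choose_mul_sub (n k : ℕ) (hk : k ≤ n) :
    (n+1).choose k * (n + 1 - k) = (n+1) * n.choose k := by
  have h1 : (n+1).choose k = (n+1).choose (n+1-k) := by
    rw [Nat.choose_symm (by omega)]
  have h2 : n + 1 - k = (n - k) + 1 := by omega
  rw [h1, h2, ← Nat.add_one_mul_choose_eq, Nat.choose_symm (by omega)]

lemma neg_one_pow_sub (n k : ℕ) (hk : k ≤ n) :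
    (-1 : ℝ) ^ (n - k) = (-1 : ℝ) ^ n * (-1 : ℝ) ^ k := by
  rw [show n = (n - k) + k from by omega, pow_add]
  rw [show (n-k) + k - k = n - k from by omega]
  have : ((-1 : ℝ) ^ k) * ((-1:ℝ))^k = 1 := by
    rw [← pow_add, show k + k = 2 * k from by ring, pow_mul]; norm_num
  calc (-1:ℝ)^(n-k) = (-1:ℝ)^(n-k) * (((-1:ℝ)^k) * ((-1:ℝ))^k) := by rw [this, mul_one]
    _ = (-1:ℝ)^(n-k) * (-1:ℝ)^k * (-1:ℝ)^k := by ring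

lemma abel_id (μ : ℝ) (hμ : 0 ≤ μ) : ∀ n : ℕ, ∀ x : ℝ, 0 < x → ∀ y : ℝ,
    ∑ k ∈ range (n+1), ((n.choose k : ℝ)) * Bz μ x k * (y + μ * ((n - k : ℕ) : ℝ)) ^ (n - k)
      = (x + y + μ * n) ^ n := by
  intro n
  induction n with
  | zero =>
    intro x hx y
    simp [Bz]
    field_simp
  | succ n ih =>
    intro x hx y
    have hxk : ∀ k : ℕ, (0:ℝ) < x + μ * k := by
      intro k; have : (0:ℝ) ≤ μ * k := by positivity
      linarith
    set F : ℝ → ℝ := fun y => ∑ k ∈ range (n+2),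
      (((n+1).choose k : ℝ)) * Bz μ x k * (y + μ * (((n+1) - k : ℕ) : ℝ)) ^ ((n+1) - k) with hF
    set G : ℝ → ℝ := fun y => (x + y + μ * (n+1)) ^ (n+1) with hG
    have hFd : ∀ y : ℝ, HasDerivAt F ((n+1) * (x + y + μ * (n+1)) ^ n) y := by
      intro y
      have h1 : HasDerivAt F (∑ k ∈ range (n+2), (((n+1).choose k : ℝ)) * Bz μ x k *
          ((((n+1) - k : ℕ) : ℝ) * (y + μ * (((n+1) - k : ℕ) : ℝ)) ^ ((n+1) - k - 1) * 1)) y := by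
        apply HasDerivAt.fun_sum
        intro k _
        exact (((hasDerivAt_id y).add_const (μ * (((n+1) - k : ℕ) : ℝ))).pow ((n+1)-k)).const_mul _
      convert h1 using 1
      rw [Finset.sum_range_succ]
      have hlast : (((n+1).choose (n+1) : ℝ)) * Bz μ x (n+1) *
          ((((n+1) - (n+1) : ℕ) : ℝ) * (y + μ * (((n+1) - (n+1) : ℕ) : ℝ)) ^ ((n+1) - (n+1) - 1) * 1) = 0 := by
        simp
      rw [hlast, add_zero]
      have hterm : ∀ k ∈ range (n+1), (((n+1).choose k : ℝ)) * Bz μ x k *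
          ((((n+1) - k : ℕ) : ℝ) * (y + μ * (((n+1) - k : ℕ) : ℝ)) ^ ((n+1) - k - 1) * 1)
          = (n+1 : ℝ) * (((n.choose k : ℝ)) * Bz μ x k * ((y + μ) + μ * ((n - k : ℕ) : ℝ)) ^ (n - k)) := by
        intro k hk
        have hk' : k ≤ n := by have := Finset.mem_range.mp hk; omega
        have hc : (((n+1).choose k : ℝ)) * (((n+1) - k : ℕ) : ℝ) = (n+1 : ℝ) * (n.choose k : ℝ) := by
          have := choose_mul_sub n k hk'
          exact_mod_cast congrArg (fun z : ℕ => (z : ℝ)) this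
        have he : (n+1) - k - 1 = n - k := by omega
        have hcast : (((n+1) - k : ℕ) : ℝ) = ((n - k : ℕ) : ℝ) + 1 := by
          have : (n+1) - k = (n - k) + 1 := by omega
          rw [this]; push_cast; ring
        rw [he, hcast]
        calc (((n+1).choose k : ℝ)) * Bz μ x k *
            ((((n - k : ℕ) : ℝ) + 1) * (y + μ * (((n - k : ℕ) : ℝ) + 1)) ^ (n - k) * 1)
            = ((((n+1).choose k : ℝ)) * (((n - k : ℕ) : ℝ) + 1)) * (Bz μ x k * (y + μ * (((n - k : ℕ) : ℝ) + 1)) ^ (n - k)) := by ring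
          _ = ((n+1 : ℝ) * (n.choose k : ℝ)) * (Bz μ x k * (y + μ * (((n - k : ℕ) : ℝ) + 1)) ^ (n - k)) := by
              rw [← hc, hcast]
          _ = (n+1 : ℝ) * (((n.choose k : ℝ)) * Bz μ x k * ((y + μ) + μ * ((n - k : ℕ) : ℝ)) ^ (n - k)) := by
              rw [show y + μ * (((n - k : ℕ) : ℝ) + 1) = (y + μ) + μ * ((n - k : ℕ) : ℝ) from by ring]
              ring
      rw [Finset.sum_congr rfl hterm, ← Finset.mul_sum, ih x hx (y + μ)]
      rw [show x + (y + μ) + μ * n = x + y + μ * (n+1) from by push_cast; ring]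
    have hGd : ∀ y : ℝ, HasDerivAt G ((n+1) * (x + y + μ * (n+1)) ^ n) y := by
      intro y
      have h1 : HasDerivAt (fun y : ℝ => x + y + μ * (n+1)) 1 y := by
        simpa using ((hasDerivAt_id y).const_add x).add_const (μ * ((n:ℝ)+1))
      have h2 := h1.fun_pow (n+1)
      simpa using h2
    have hconst : ∀ y₁ y₂ : ℝ, F y₁ - G y₁ = F y₂ - G y₂ := by
      intro y₁ y₂
      have hd : ∀ y : ℝ, HasDerivAt (fun y => F y - G y) 0 y := by
        intro y
        simpa using (hFd y).fun_sub (hGd y)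
      exact is_const_of_deriv_eq_zero (fun y => (hd y).differentiableAt)
        (fun y => (hd y).deriv) y₁ y₂
    set y₀ : ℝ := -x - μ * (n+1) with hy₀
    have hGz : G y₀ = 0 := by
      rw [hG]
      simp only [hy₀]
      rw [show x + (-x - μ * (n+1)) + μ * (n+1) = 0 from by ring]
      simp
    have hFz : F y₀ = 0 := by
      show ∑ k ∈ range (n+2),
        (((n+1).choose k : ℝ)) * Bz μ x k * (y₀ + μ * (((n+1) - k : ℕ) : ℝ)) ^ ((n+1) - k) = 0
      have hterm : ∀ k ∈ range (n+2),
          (((n+1).choose k : ℝ)) * Bz μ x k * (y₀ + μ * (((n+1) - k : ℕ) : ℝ)) ^ ((n+1) - k)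
          = ((-1:ℝ)^(n+1) * x) * ((-1:ℝ)^k * (((n+1).choose k : ℝ)) * (x + μ * k) ^ n) := by
        intro k hk
        have hk' : k ≤ n + 1 := by have := Finset.mem_range.mp hk; omega
        have hcast : (((n+1) - k : ℕ) : ℝ) = ((n:ℝ) + 1) - k := by
          push_cast [Nat.cast_sub hk']; ring
        have harg : y₀ + μ * (((n+1) - k : ℕ) : ℝ) = -(x + μ * k) := by
          rw [hcast, hy₀]; push_cast; ring
        rw [harg, neg_pow]
        have hzp : (x + μ * k) ^ (((n+1) - k : ℕ)) = (x + μ * k) ^ ((((n+1) - k : ℕ)) : ℤ) := by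
          rw [zpow_natCast]
        have hne : x + μ * k ≠ 0 := ne_of_gt (hxk k)
        have hcomb : Bz μ x k * (x + μ * k) ^ (((n+1) - k : ℕ))
            = x * (x + μ * k) ^ n := by
          rw [Bz, hzp, mul_assoc, ← zpow_add₀ hne]
          rw [show (k:ℤ) - 1 + (((n+1) - k : ℕ) : ℤ) = (n : ℤ) from by push_cast [Nat.cast_sub hk']; ring]
          rw [zpow_natCast]
        have hneg : (-1:ℝ) ^ ((n+1) - k) = (-1:ℝ)^(n+1) * (-1:ℝ)^k := neg_one_pow_sub (n+1) k hk'
        calc (((n+1).choose k : ℝ)) * Bz μ x k * ((-1:ℝ)^((n+1)-k) * (x + μ * k) ^ ((n+1)-k))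
            = (-1:ℝ)^((n+1)-k) * (((n+1).choose k : ℝ)) * (Bz μ x k * (x + μ * k) ^ ((n+1)-k)) := by ring
          _ = (-1:ℝ)^((n+1)-k) * (((n+1).choose k : ℝ)) * (x * (x + μ * k) ^ n) := by rw [hcomb]
          _ = ((-1:ℝ)^(n+1) * x) * ((-1:ℝ)^k * (((n+1).choose k : ℝ)) * (x + μ * k) ^ n) := by
              rw [hneg]; ring
      rw [Finset.sum_congr rfl hterm, ← Finset.mul_sum]
      have hfd := finite_diff (n+1) n (by omega) x μ
      rw [hfd, mul_zero]
    have := hconst y y₀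
    rw [hFz, hGz, sub_zero] at this
    have hFy : F y = G y := by linarith [this]
    rw [show ((n+1:ℕ):ℝ) = (n:ℝ)+1 from by push_cast; ring]
    exact hFy

lemma hurwitz (μ : ℝ) (hμ : 0 ≤ μ) (n : ℕ) (x y : ℝ) (hx : 0 < x) (hy : 0 < y) :
    ∑ k ∈ range (n+1), ((n.choose k : ℝ)) * Bz μ x k * Bz μ y (n - k) = Bz μ (x+y) n := by
  have hyj : ∀ j : ℕ, (0:ℝ) < y + μ * j := by
    intro j; have : (0:ℝ) ≤ μ * j := by positivity
    linarith
  have hBy : ∀ j : ℕ, Bz μ y j = (y + μ*j)^j - μ*j*(y + μ*j)^((j:ℤ)-1) := by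
    intro j
    rw [Bz]
    have h1 : (y + μ*j)^j = (y+μ*j)^((j:ℤ)) := (zpow_natCast _ _).symm
    rw [h1, show (j:ℤ) = ((j:ℤ)-1) + 1 from by ring, zpow_add₀ (ne_of_gt (hyj j)), zpow_one]
    ring
  cases n with
  | zero => simp [Bz]; field_simp
  | succ n =>
    simp only [hBy, mul_sub]
    rw [Finset.sum_sub_distrib]
    have h1 : ∑ k ∈ range (n+1+1), ((n+1).choose k : ℝ) * Bz μ x k *
        (y + μ * ((n+1-k : ℕ) : ℝ)) ^ (n+1-k) = (x + y + μ * (n+1:ℕ)) ^ (n+1) :=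
      abel_id μ hμ (n+1) x hx y
    have h2 : ∑ k ∈ range (n+1+1), ((n+1).choose k : ℝ) * Bz μ x k *
        (μ * ((n+1-k:ℕ):ℝ) * (y + μ * ((n+1-k:ℕ):ℝ)) ^ (((n+1-k:ℕ):ℤ)-1))
        = μ * (n+1) * (x + y + μ * (n+1:ℕ)) ^ n := by
      rw [Finset.sum_range_succ]
      have hlast : ((n+1).choose (n+1) : ℝ) * Bz μ x (n+1) *
          (μ * ((n+1-(n+1):ℕ):ℝ) * (y + μ * ((n+1-(n+1):ℕ):ℝ)) ^ (((n+1-(n+1):ℕ):ℤ)-1)) = 0 := by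
        simp
      rw [hlast, add_zero]
      have hterm : ∀ k ∈ range (n+1), ((n+1).choose k : ℝ) * Bz μ x k *
          (μ * ((n+1-k:ℕ):ℝ) * (y + μ * ((n+1-k:ℕ):ℝ)) ^ (((n+1-k:ℕ):ℤ)-1))
          = (μ * (n+1)) * ((n.choose k : ℝ) * Bz μ x k * ((y+μ) + μ * ((n-k:ℕ):ℝ)) ^ (n-k)) := by
        intro k hk
        have hk' : k ≤ n := by have := Finset.mem_range.mp hk; omega
        have hs : n + 1 - k = (n - k) + 1 := by omega
        have hzp : (y + μ * ((n+1-k:ℕ):ℝ)) ^ (((n+1-k:ℕ):ℤ)-1) = (y + μ * ((n+1-k:ℕ):ℝ)) ^ (n-k) := by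
          rw [show ((n+1-k:ℕ):ℤ)-1 = ((n-k:ℕ):ℤ) from by rw [hs]; push_cast; ring]
          rw [zpow_natCast]
        rw [hzp]
        have hc : (((n+1).choose k : ℝ)) * ((n+1-k : ℕ) : ℝ) = ((n:ℝ)+1) * (n.choose k : ℝ) := by
          have := choose_mul_sub n k hk'
          exact_mod_cast congrArg (fun z : ℕ => (z : ℝ)) this
        have hcast : ((n+1-k : ℕ) : ℝ) = ((n - k : ℕ) : ℝ) + 1 := by
          rw [hs]; push_cast; ring
        calc ((n+1).choose k : ℝ) * Bz μ x k *
            (μ * ((n+1-k:ℕ):ℝ) * (y + μ * ((n+1-k:ℕ):ℝ)) ^ (n-k))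
            = μ * (((n+1).choose k : ℝ) * ((n+1-k:ℕ):ℝ)) *
              (Bz μ x k * (y + μ * ((n+1-k:ℕ):ℝ)) ^ (n-k)) := by ring
          _ = μ * (((n:ℝ)+1) * (n.choose k : ℝ)) *
              (Bz μ x k * ((y+μ) + μ * ((n-k:ℕ):ℝ)) ^ (n-k)) := by
              rw [hc, hcast, show y + μ * (((n - k : ℕ) : ℝ) + 1) = (y + μ) + μ * ((n - k : ℕ) : ℝ) from by ring]
          _ = (μ * (n+1)) * ((n.choose k : ℝ) * Bz μ x k * ((y+μ) + μ * ((n-k:ℕ):ℝ)) ^ (n-k)) := by ring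
      rw [Finset.sum_congr rfl hterm, ← Finset.mul_sum, abel_id μ hμ n x hx (y + μ)]
      rw [show x + (y + μ) + μ * n = x + y + μ * ((n+1:ℕ):ℝ) from by push_cast; ring]
    rw [h1, h2, Bz]
    rw [show ((n+1:ℕ):ℤ) - 1 = (n:ℤ) from by push_cast; ring]
    rw [zpow_natCast]
    rw [show x + y + μ * ((n+1:ℕ):ℝ) = (x + y + μ * (n+1:ℕ)) from by norm_num]
    rw [pow_succ]
    push_cast
    ring

noncomputable def Bc (μ : ℝ) (r k : ℕ) : ℝ := if k = 0 then 1 else r * (μ * k + r)^(k-1)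

lemma Bc_nonneg (μ : ℝ) (hμ : 0 ≤ μ) (r k : ℕ) : 0 ≤ Bc μ r k := by
  rw [Bc]
  split
  · norm_num
  · have h1 : (0:ℝ) ≤ μ * k + r := by positivity
    positivity

lemma Bc_eq_Bz (μ : ℝ) (hμ : 0 ≤ μ) (r : ℕ) (hr : 1 ≤ r) (k : ℕ) :
    Bc μ r k = Bz μ (r : ℝ) k := by
  have hrpos : (0:ℝ) < r := by exact_mod_cast hr
  cases k with
  | zero =>
    simp [Bc, Bz]
    field_simp
  | succ k =>
    simp only [Bc, Bz, Nat.succ_ne_zero, if_false]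
    rw [show ((k+1 : ℕ) : ℤ) - 1 = (k : ℤ) from by push_cast; ring, zpow_natCast]
    rw [show (k + 1) - 1 = k from rfl]
    ring_nf

lemma Bc_conv (μ : ℝ) (hμ : 0 ≤ μ) (r s : ℕ) (hr : 1 ≤ r) (hs : 1 ≤ s) (n : ℕ) :
    ∑ k ∈ range (n+1), (n.choose k : ℝ) * Bc μ r k * Bc μ s (n-k) = Bc μ (r+s) n := by
  have hrpos : (0:ℝ) < r := by exact_mod_cast hr
  have hspos : (0:ℝ) < s := by exact_mod_cast hs
  have h := hurwitz μ hμ n (r:ℝ) (s:ℝ) hrpos hspos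
  simp only [Bc_eq_Bz μ hμ r hr, Bc_eq_Bz μ hμ s hs, Bc_eq_Bz μ hμ (r+s) (by omega)]
  rw [h]
  norm_num

lemma sqrt32 (j : ℕ) : ((j:ℝ)+1) ^ (-(3/2 : ℝ)) = 1 / (((j:ℝ)+1) * Real.sqrt ((j:ℝ)+1)) := by
  have hJ : (0:ℝ) < (j:ℝ)+1 := by positivity
  rw [Real.rpow_neg (le_of_lt hJ), show (3/2 : ℝ) = 1 + 2⁻¹ from by norm_num,
    Real.rpow_add hJ, Real.rpow_one]
  rw [show ((j:ℝ)+1) ^ ((2:ℝ)⁻¹) = Real.sqrt ((j:ℝ)+1) from by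
    rw [Real.sqrt_eq_rpow]; norm_num]
  rw [inv_eq_one_div]

lemma summable_term (μ : ℝ) (hμ : 0 < μ) (z : ℝ) (hz0 : 0 ≤ z)
    (hz : z ≤ 1 / (Real.exp 1 * μ)) (r : ℕ) :
    Summable (fun k => Bc μ r k * z ^ k / (Nat.factorial k : ℝ)) := by
  obtain ⟨a, ha0, ha⟩ := Stirling.stirlingSeq'_bounded_by_pos_constant
  set C : ℝ := (r : ℝ) * Real.exp (r / μ) / (a * Real.sqrt 2 * μ) with hC
  have hCnn : 0 ≤ C := by positivity
  have hb : Summable (fun j : ℕ => C / (((j:ℝ)+1) * Real.sqrt ((j:ℝ)+1))) := by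
    have h32 : Summable (fun n : ℕ => ((n:ℝ)) ^ (-(3/2 : ℝ))) :=
      Real.summable_nat_rpow.mpr (by norm_num)
    have h32' : Summable (fun j : ℕ => ((j:ℝ)+1) ^ (-(3/2 : ℝ))) := by
      have h := (summable_nat_add_iff 1).mpr h32
      apply h.congr
      intro j
      push_cast
      ring_nf
    have := h32'.mul_left C
    apply this.congr
    intro j
    rw [sqrt32 j]
    ring
  have key : ∀ j : ℕ, Bc μ r (j+1) * z ^ (j+1) / (Nat.factorial (j+1) : ℝ)
      ≤ C / (((j:ℝ)+1) * Real.sqrt ((j:ℝ)+1)) := by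
    intro j
    set J : ℝ := (j:ℝ)+1 with hJdef
    have hJ : (0:ℝ) < J := by positivity
    have hμJ : (0:ℝ) < μ * J := by positivity
    have hsJ : (0:ℝ) < Real.sqrt J := Real.sqrt_pos.mpr hJ
    have hBceq : Bc μ r (j+1) = r * (μ * J + r) ^ j := by
      rw [Bc]
      simp only [Nat.succ_ne_zero, if_false, Nat.add_sub_cancel]
      push_cast
      ring_nf
      rw [hJdef]; ring
    have h1 : Bc μ r (j+1) ≤ (r : ℝ) * ((μ * J) ^ j * Real.exp ((r:ℝ)/μ)) := by
      rw [hBceq]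
      have e1 : μ * J + r = (μ * J) * (1 + (r:ℝ)/(μ*J)) := by field_simp
      rw [e1, mul_pow]
      have e2 : (1 + (r:ℝ)/(μ*J)) ^ j ≤ Real.exp ((r:ℝ)/(μ*J)) ^ j := by
        apply pow_le_pow_left₀ (by positivity)
        linarith [Real.add_one_le_exp ((r:ℝ)/(μ*J))]
      have e3 : Real.exp ((r:ℝ)/(μ*J)) ^ j ≤ Real.exp ((r:ℝ)/μ) := by
        rw [← Real.exp_nat_mul]
        apply Real.exp_le_exp.mpr
        rw [mul_div_assoc', div_le_div_iff₀ hμJ hμ]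
        simp only [hJdef]
        nlinarith [mul_nonneg (mul_nonneg (Nat.cast_nonneg (α := ℝ) r) (le_of_lt hμ)) (Nat.cast_nonneg (α := ℝ) j), mul_nonneg (Nat.cast_nonneg (α := ℝ) r) (le_of_lt hμ)]
      have := mul_le_mul_of_nonneg_left (le_trans e2 e3) (pow_nonneg (le_of_lt hμJ) j)
      nlinarith [this, Nat.cast_nonneg (α := ℝ) r]
    have h2 : z ^ (j+1) ≤ (1/(Real.exp 1 * μ)) ^ (j+1) := pow_le_pow_left₀ hz0 hz _
    have h3 : a * (Real.sqrt (2*J) * (J/Real.exp 1) ^ (j+1)) ≤ (Nat.factorial (j+1) : ℝ) := by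
      have := ha j
      rw [Stirling.stirlingSeq] at this
      have hden : (0:ℝ) < Real.sqrt (2*(j+1:ℕ)) * (((j+1:ℕ):ℝ)/Real.exp 1) ^ (j+1) := by
        apply mul_pos (Real.sqrt_pos.mpr (by positivity))
        positivity
      rw [le_div_iff₀ hden] at this
      calc a * (Real.sqrt (2*J) * (J/Real.exp 1) ^ (j+1))
          = a * (Real.sqrt (2*((j+1:ℕ):ℝ)) * (((j+1:ℕ):ℝ)/Real.exp 1) ^ (j+1)) := by
            rw [hJdef]; push_cast; ring_nf
        _ ≤ (Nat.factorial (j+1) : ℝ) := this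
    have hnum_nn : (0:ℝ) ≤ (r : ℝ) * ((μ * J) ^ j * Real.exp ((r:ℝ)/μ)) * (1/(Real.exp 1 * μ)) ^ (j+1) := by positivity
    have hden_pos : (0:ℝ) < a * (Real.sqrt (2*J) * (J/Real.exp 1) ^ (j+1)) := by
      apply mul_pos ha0
      apply mul_pos (Real.sqrt_pos.mpr (by positivity))
      positivity
    have hstep : Bc μ r (j+1) * z ^ (j+1) / (Nat.factorial (j+1) : ℝ)
        ≤ ((r : ℝ) * ((μ * J) ^ j * Real.exp ((r:ℝ)/μ)) * (1/(Real.exp 1 * μ)) ^ (j+1))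
          / (a * (Real.sqrt (2*J) * (J/Real.exp 1) ^ (j+1))) := by
      apply div_le_div₀ hnum_nn _ hden_pos h3
      exact mul_le_mul h1 h2 (by positivity) (by positivity)
    refine le_trans hstep (le_of_eq ?_)
    have hsqrt : Real.sqrt (2*J) = Real.sqrt 2 * Real.sqrt J := Real.sqrt_mul (by norm_num) J
    have hexpne : Real.exp 1 ≠ 0 := Real.exp_ne_zero 1
    have hμne : μ ≠ 0 := ne_of_gt hμ
    have hane : a ≠ 0 := ne_of_gt ha0
    have hsJne : Real.sqrt J ≠ 0 := ne_of_gt hsJ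
    have hs2ne : Real.sqrt 2 ≠ 0 := by positivity
    have hJne : J ≠ 0 := ne_of_gt hJ
    have hp1 : ((1:ℝ)/(Real.exp 1*μ))^(j+1) = 1/(Real.exp 1^(j+1) * μ^(j+1)) := by
      rw [div_pow, mul_pow, one_pow]
    have hp2 : (J/Real.exp 1)^(j+1) = J^(j+1)/Real.exp 1^(j+1) := div_pow _ _ _
    have hp3 : (μ*J)^j = μ^j * J^j := mul_pow _ _ _
    have hp4 : J^(j+1) = J^j * J := pow_succ _ _
    have hp5 : μ^(j+1) = μ^j * μ := pow_succ _ _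
    rw [hC, hsqrt, hp1, hp2, hp3, hp4, hp5]
    set E : ℝ := Real.exp 1 ^ (j+1) with hE
    set P : ℝ := μ ^ j with hP
    set Q : ℝ := J ^ j with hQ
    have hEne : E ≠ 0 := by rw [hE]; positivity
    have hPne : P ≠ 0 := by rw [hP]; positivity
    have hQne : Q ≠ 0 := by rw [hQ]; positivity
    field_simp
  have hs : Summable (fun j : ℕ => Bc μ r (j+1) * z ^ (j+1) / (Nat.factorial (j+1) : ℝ)) := by
    apply hb.of_nonneg_of_le _ key
    intro j
    have := Bc_nonneg μ (le_of_lt hμ) r (j+1)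
    positivity
  exact (summable_nat_add_iff 1).mp hs

noncomputable def S (μ : ℝ) (r : ℕ) (z : ℝ) : ℝ := ∑' k, Bc μ r k * z ^ k / (Nat.factorial k : ℝ)

lemma S_zero (μ z : ℝ) : S μ 0 z = 1 := by
  rw [S]
  rw [tsum_eq_single 0 (by
    intro k hk
    rw [Bc]
    simp only [hk, if_false]
    simp)]
  simp [Bc]

section CP
variable {μ : ℝ} (hμ : 0 < μ) {z : ℝ} (hz0 : 0 ≤ z) (hz : z ≤ 1 / (Real.exp 1 * μ))
include hμ hz0 hz

set_option maxHeartbeats 1000000 in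
lemma S_mul (r s : ℕ) (hr : 1 ≤ r) (hs : 1 ≤ s) :
    S μ r z * S μ s z = S μ (r+s) z := by
  have hf := summable_term μ hμ z hz0 hz r
  have hg := summable_term μ hμ z hz0 hz s
  have hprod : Summable fun x : ℕ × ℕ =>
      (Bc μ r x.1 * z ^ x.1 / (Nat.factorial x.1 : ℝ)) *
      (Bc μ s x.2 * z ^ x.2 / (Nat.factorial x.2 : ℝ)) := by
    have hnn : (0 : ℕ × ℕ → ℝ) ≤ (fun x : ℕ × ℕ =>
        (Bc μ r x.1 * z ^ x.1 / (Nat.factorial x.1 : ℝ)) *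
        (Bc μ s x.2 * z ^ x.2 / (Nat.factorial x.2 : ℝ))) := by
      rintro ⟨j, k⟩
      have h1 := Bc_nonneg μ (le_of_lt hμ) r j
      have h2 := Bc_nonneg μ (le_of_lt hμ) s k
      have h3 : (0:ℝ) < (Nat.factorial j : ℝ) := by positivity
      have h4 : (0:ℝ) < (Nat.factorial k : ℝ) := by positivity
      simp only [Pi.zero_apply]
      positivity
    rw [summable_prod_of_nonneg hnn]
    refine ⟨fun j => ?_, ?_⟩
    · simp only []
      exact hg.mul_left (Bc μ r j * z ^ j / (Nat.factorial j : ℝ))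
    · apply Summable.congr (hf.mul_right (∑' k, Bc μ s k * z ^ k / (Nat.factorial k : ℝ)))
      intro j
      simp only []
      rw [tsum_mul_left]
  rw [S, S, S, Summable.tsum_mul_tsum_eq_tsum_sum_antidiagonal hf hg hprod]
  congr 1
  funext n
  rw [Finset.Nat.sum_antidiagonal_eq_sum_range_succ
    (fun i j => (Bc μ r i * z ^ i / (Nat.factorial i : ℝ)) * (Bc μ s j * z ^ j / (Nat.factorial j : ℝ)))]
  have hterm : ∀ k ∈ range (n+1),
      (Bc μ r k * z ^ k / (Nat.factorial k : ℝ)) * (Bc μ s (n-k) * z ^ (n-k) / (Nat.factorial (n-k) : ℝ))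
      = ((n.choose k : ℝ) * Bc μ r k * Bc μ s (n-k)) * (z ^ n / (Nat.factorial n : ℝ)) := by
    intro k hk
    have hk' : k ≤ n := by have := Finset.mem_range.mp hk; omega
    have hzz : z ^ k * z ^ (n-k) = z ^ n := by
      rw [← pow_add]
      congr 1
      omega
    have hch : (n.choose k : ℝ) = (Nat.factorial n : ℝ) / ((Nat.factorial k : ℝ) * (Nat.factorial (n-k) : ℝ)) :=
      Nat.cast_choose ℝ hk'
    have hfk : (0:ℝ) < (Nat.factorial k : ℝ) := by positivity
    have hfnk : (0:ℝ) < (Nat.factorial (n-k) : ℝ) := by positivity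
    have hfn : (0:ℝ) < (Nat.factorial n : ℝ) := by positivity
    rw [hch]
    field_simp
    rw [← hzz]
    ring
  rw [Finset.sum_congr rfl hterm, ← Finset.sum_mul, Bc_conv μ (le_of_lt hμ) r s hr hs n]
  ring

lemma S_pow : ∀ r : ℕ, S μ 1 z ^ r = S μ r z := by
  intro r
  induction r with
  | zero => rw [pow_zero, S_zero]
  | succ r ih =>
    cases Nat.eq_zero_or_pos r with
    | inl h0 => subst h0; rw [pow_one]
    | inr hpos =>
      rw [pow_succ, ih, S_mul hμ hz0 hz r 1 hpos le_rfl]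

end CP

lemma coeffE (m : ℕ) (hm : 1 ≤ m) (n : ℕ) :
    ∑ j ∈ range (n+1), (n.choose j : ℝ) * Bc (m:ℝ) (m*j) (n-j) = Bc (m:ℝ) 1 n := by
  have hμ : (0:ℝ) < m := by exact_mod_cast hm
  cases n with
  | zero => simp [Bc]
  | succ n =>
    have hRHS : Bc (m:ℝ) 1 (n+1) = ((m:ℝ)*((n:ℝ)+1)+1)^n := by
      rw [Bc]
      simp only [Nat.succ_ne_zero, if_false, Nat.add_sub_cancel]
      push_cast
      ring_nf
    rw [hRHS]
    rw [Finset.sum_range_succ' (fun j => (((n+1).choose j : ℝ)) * Bc (m:ℝ) (m*j) ((n+1)-j))]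
    have h0 : (((n+1).choose 0 : ℝ)) * Bc (m:ℝ) (m*0) ((n+1)-0) = 0 := by
      rw [Bc]
      simp
    rw [h0, add_zero]
    have hterm : ∀ j ∈ range (n+1), (((n+1).choose (j+1) : ℝ)) * Bc (m:ℝ) (m*(j+1)) ((n+1)-(j+1))
        = (n.choose j : ℝ) * ((m:ℝ)*((n:ℝ)+1))^(n-j) := by
      intro j hj
      have hj' : j ≤ n := by have := Finset.mem_range.mp hj; omega
      by_cases hjn : j = n
      · subst hjn
        rw [show (j+1)-(j+1) = 0 from by omega, Bc]
        simp
      · have hlt : j < n := by omega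
        rw [show (n+1)-(j+1) = n - j from by omega, Bc]
        have hnj : ¬ (n - j = 0) := by omega
        simp only [hnj, if_false]
        have hbase : (m:ℝ) * ((n - j : ℕ):ℝ) + ((m*(j+1) : ℕ):ℝ) = (m:ℝ)*((n:ℝ)+1) := by
          rw [Nat.cast_sub (le_of_lt hlt)]
          push_cast
          ring
        rw [hbase]
        have hchoose : (((n+1).choose (j+1) : ℝ)) * ((j:ℝ)+1) = ((n:ℝ)+1) * (n.choose j : ℝ) := by
          have := Nat.add_one_mul_choose_eq n j
          have h2 : ((n+1) * n.choose j : ℕ) = ((n+1).choose (j+1) * (j+1) : ℕ) := this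
          exact_mod_cast (congrArg (fun z : ℕ => (z:ℝ)) h2).symm
        have hX : ((m:ℝ)*((n:ℝ)+1))^(n-j) = ((m:ℝ)*((n:ℝ)+1)) * ((m:ℝ)*((n:ℝ)+1))^(n-j-1) := by
          rw [← pow_succ']
          congr 1
          omega
        rw [hX]
        push_cast
        linear_combination ((m:ℝ) * ((m:ℝ)*((n:ℝ)+1))^(n-j-1)) * hchoose
    rw [Finset.sum_congr rfl hterm]
    have hap := add_pow (1:ℝ) ((m:ℝ)*((n:ℝ)+1)) n
    simp only [one_pow, one_mul] at hap
    rw [show (m:ℝ)*((n:ℝ)+1)+1 = 1 + (m:ℝ)*((n:ℝ)+1) from by ring, hap]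
    apply Finset.sum_congr rfl
    intro j hj
    ring

set_option maxHeartbeats 1000000 in
lemma exp_S (m : ℕ) (hm : 1 ≤ m) {z : ℝ} (hz0 : 0 ≤ z)
    (hz : z ≤ 1 / (Real.exp 1 * (m:ℝ))) :
    Real.exp (z * S (m:ℝ) m z) = S (m:ℝ) 1 z := by
  have hμ : (0:ℝ) < (m:ℝ) := by exact_mod_cast hm
  set u : ℝ := S (m:ℝ) m z with hu
  set F : ℕ × ℕ → ℝ := fun p => Bc (m:ℝ) (m*p.1) p.2 * z^(p.1+p.2) /
    ((Nat.factorial p.1 : ℝ) * (Nat.factorial p.2 : ℝ)) with hF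
  have hFnn : (0 : ℕ × ℕ → ℝ) ≤ F := by
    rintro ⟨j, k⟩
    have h1 := Bc_nonneg (m:ℝ) (le_of_lt hμ) (m*j) k
    have h3 : (0:ℝ) < (Nat.factorial j : ℝ) := by positivity
    have h4 : (0:ℝ) < (Nat.factorial k : ℝ) := by positivity
    simp only [Pi.zero_apply, hF]
    positivity
  have hSmj : ∀ j : ℕ, S (m:ℝ) (m*j) z = u ^ j := by
    intro j
    rw [hu, ← S_pow hμ hz0 hz m, ← pow_mul, S_pow hμ hz0 hz (m*j)]
  have hrow : ∀ j k : ℕ, F (j, k) = (z^j/(Nat.factorial j : ℝ)) *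
      (Bc (m:ℝ) (m*j) k * z^k/(Nat.factorial k : ℝ)) := by
    intro j k
    simp only [hF]
    rw [pow_add]
    ring
  have hrowsum : ∀ j : ℕ, ∑' k, F (j, k) = (z * u)^j / (Nat.factorial j : ℝ) := by
    intro j
    calc ∑' k, F (j, k) = ∑' k, (z^j/(Nat.factorial j : ℝ)) *
        (Bc (m:ℝ) (m*j) k * z^k/(Nat.factorial k : ℝ)) := tsum_congr (fun k => hrow j k)
      _ = (z^j/(Nat.factorial j : ℝ)) * S (m:ℝ) (m*j) z := by rw [tsum_mul_left]; rfl
      _ = (z * u)^j / (Nat.factorial j : ℝ) := by rw [hSmj j, mul_pow]; ring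
  have hrowsummable : ∀ j : ℕ, Summable (fun k => F (j, k)) := by
    intro j
    apply Summable.congr ((summable_term (m:ℝ) hμ z hz0 hz (m*j)).mul_left (z^j/(Nat.factorial j : ℝ)))
    intro k
    rw [← hrow j k]
  have hFsum : Summable F := by
    rw [summable_prod_of_nonneg hFnn]
    refine ⟨hrowsummable, ?_⟩
    apply Summable.congr (Real.summable_pow_div_factorial (z * u))
    intro j
    exact (hrowsum j).symm
  have h1 : Real.exp (z * u) = ∑' j, (z * u)^j / (Nat.factorial j : ℝ) := by
    rw [Real.exp_eq_exp_ℝ, NormedSpace.exp_eq_tsum_div]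
  have h2 : ∑' j, (z * u)^j / (Nat.factorial j : ℝ) = ∑' p : ℕ × ℕ, F p := by
    rw [Summable.tsum_prod' hFsum hrowsummable]
    exact tsum_congr (fun j => (hrowsum j).symm)
  have h3 : ∑' p : ℕ × ℕ, F p = ∑' n, ∑ kl ∈ Finset.HasAntidiagonal.antidiagonal n, F kl := by
    conv_rhs => congr; ext; rw [← Finset.sum_finset_coe, ← tsum_fintype (L := .unconditional _)]
    rw [← Finset.HasAntidiagonal.sigmaAntidiagonalEquivProd.tsum_eq F]
    exact Summable.tsum_sigma' (fun n => (hasSum_fintype _).summable)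
      (Finset.HasAntidiagonal.sigmaAntidiagonalEquivProd.summable_iff.mpr hFsum)
  have h4 : ∀ n : ℕ, ∑ kl ∈ Finset.HasAntidiagonal.antidiagonal n, F kl
      = Bc (m:ℝ) 1 n * z^n / (Nat.factorial n : ℝ) := by
    intro n
    rw [Finset.Nat.sum_antidiagonal_eq_sum_range_succ_mk]
    have hterm : ∀ j ∈ range (n+1), F (j, n-j)
        = ((n.choose j : ℝ) * Bc (m:ℝ) (m*j) (n-j)) * (z^n / (Nat.factorial n : ℝ)) := by
      intro j hj
      have hj' : j ≤ n := by have := Finset.mem_range.mp hj; omega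
      simp only [hF]
      have hzz : j + (n - j) = n := by omega
      rw [hzz]
      have hch : (n.choose j : ℝ) = (Nat.factorial n : ℝ) /
          ((Nat.factorial j : ℝ) * (Nat.factorial (n-j) : ℝ)) := Nat.cast_choose ℝ hj'
      have hfk : (0:ℝ) < (Nat.factorial j : ℝ) := by positivity
      have hfnk : (0:ℝ) < (Nat.factorial (n-j) : ℝ) := by positivity
      have hfn : (0:ℝ) < (Nat.factorial n : ℝ) := by positivity
      rw [hch]
      field_simp
    rw [Finset.sum_congr rfl hterm, ← Finset.sum_mul, coeffE m hm n]
    ring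
  rw [h1, h2, h3]
  rw [S]
  exact tsum_congr h4


/-- `f m c = ∑_{k=0}^∞ (km+1)^{k-1} c^k e^{-c(km+1)/m} / (m^k k!)`, where the factor
`(km+1)^{k-1}` for `k = 0` is interpreted as `1` (here via `ℕ`-subtraction in the exponent,
which gives `(0·m+1)^0 = 1`). -/
noncomputable def f (m c : ℝ) : ℝ :=
  ∑' k : ℕ, ((k : ℝ) * m + 1) ^ (k - 1) * c ^ k *
    Real.exp (-c * ((k : ℝ) * m + 1) / m) / (m ^ k * (Nat.factorial k : ℝ))

theorem f_functional_equation (m : ℕ) (hm : 0 < m) (c : ℝ) (hc : 0 < c) :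
    f (m : ℝ) c = Real.exp (-c * (1 - f (m : ℝ) c ^ m) / m) ∧
      f (m : ℝ) c ^ m = Real.exp (-c * (1 - f (m : ℝ) c ^ m)) := by
  have hm1 : 1 ≤ m := hm
  have hμ : (0:ℝ) < (m:ℝ) := by exact_mod_cast hm
  have hμne : (m:ℝ) ≠ 0 := ne_of_gt hμ
  set μ : ℝ := (m:ℝ) with hμdef
  set t : ℝ := c / μ with ht
  have ht0 : 0 < t := div_pos hc hμ
  set z : ℝ := t * Real.exp (-(μ * t)) with hzdef
  have hz0 : (0:ℝ) ≤ z := by positivity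
  have hzle : z ≤ 1 / (Real.exp 1 * μ) := by
    have h1 : μ * t ≤ Real.exp (μ * t - 1) * 1 := by
      simpa using Real.add_one_le_exp (μ * t - 1)
    have h2 : μ * t * Real.exp (-(μ * t)) ≤ 1 / Real.exp 1 := by
      have hepos : (0:ℝ) < Real.exp (-(μ * t)) := Real.exp_pos _
      have := mul_le_mul_of_nonneg_right (by simpa using h1) (le_of_lt hepos)
      calc μ * t * Real.exp (-(μ * t)) ≤ Real.exp (μ * t - 1) * Real.exp (-(μ * t)) := this
        _ = 1 / Real.exp 1 := by
            rw [← Real.exp_add]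
            rw [show μ * t - 1 + -(μ * t) = -1 from by ring, Real.exp_neg]
            rw [inv_eq_one_div]
    rw [hzdef]
    rw [show (1:ℝ) / (Real.exp 1 * μ) = (1 / Real.exp 1) / μ from by field_simp]
    rw [← sub_nonneg]
    have : (1 / Real.exp 1) / μ - t * Real.exp (-(μ * t))
        = (1 / Real.exp 1 - μ * t * Real.exp (-(μ * t))) / μ := by field_simp
    rw [this]
    apply div_nonneg _ (le_of_lt hμ)
    linarith [h2]
  have hBc1 : ∀ k : ℕ, Bc μ 1 k = ((k:ℝ) * μ + 1) ^ (k - 1) := by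
    intro k
    cases k with
    | zero => simp [Bc]
    | succ k =>
      rw [Bc]
      simp only [Nat.succ_ne_zero, if_false, Nat.add_sub_cancel, Nat.cast_one]
      push_cast
      ring_nf
  have hfS : f μ c = Real.exp (-t) * S μ 1 z := by
    rw [f, S, ← tsum_mul_left]
    apply tsum_congr
    intro k
    rw [hBc1 k]
    have hexp : Real.exp (-c * ((k:ℝ)*μ+1)/μ) = Real.exp (-t) * Real.exp (-(μ*t))^k := by
      rw [← Real.exp_nat_mul, ← Real.exp_add]
      congr 1
      have hcval : c = μ * t := by rw [ht]; field_simp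
      rw [hcval]
      field_simp
      ring
    rw [hexp, hzdef, mul_pow, ht, div_pow]
    have hfk : (0:ℝ) < (Nat.factorial k : ℝ) := by positivity
    have hμk : μ ^ k ≠ 0 := pow_ne_zero k hμne
    field_simp
  have hfm : f μ c ^ m = Real.exp (-(μ * t)) * S μ m z := by
    rw [hfS, mul_pow, S_pow hμ hz0 hzle m, ← Real.exp_nat_mul]
    congr 2
    rw [hμdef]
    ring
  have hkey : Real.exp (z * S μ m z) = S μ 1 z := exp_S m hm1 hz0 hzle
  have hzS : z * S μ m z = t * f μ c ^ m := by
    rw [hfm, hzdef]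
    ring
  have hS1 : S μ 1 z = Real.exp t * f μ c := by
    rw [hfS, ← mul_assoc, ← Real.exp_add]
    simp
  have main : Real.exp (t * f μ c ^ m) = Real.exp t * f μ c := by
    rw [← hzS, hkey, hS1]
  have harg : -c * (1 - f μ c ^ m) / μ = t * f μ c ^ m + -t := by
    rw [ht]
    field_simp
    ring
  have e1 : f μ c = Real.exp (-c * (1 - f μ c ^ m) / μ) := by
    rw [harg, Real.exp_add, main]
    rw [mul_comm (Real.exp t) (f μ c), mul_assoc, ← Real.exp_add]
    simp
  refine ⟨e1, ?_⟩
  calc f μ c ^ m = Real.exp (-c * (1 - f μ c ^ m) / μ) ^ m := by rw [← e1]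
    _ = Real.exp ((m:ℝ) * (-c * (1 - f μ c ^ m) / μ)) := (Real.exp_nat_mul _ m).symm
    _ = Real.exp (-c * (1 - f μ c ^ m)) := by
        congr 1
        rw [hμdef]
        field_simp
end

section
/- For every positive integer m and every real number c with 0 < c ≤ 1, f(m,c) = 1. -/
open Polynomial Finset

lemma degree_comp_sub_lt (P : ℝ[X]) (hP : P ≠ 0) :
    (P.comp (X + 1) - P).degree < P.degree := by
  rcases eq_or_ne P.natDegree 0 with h0 | h0
  · obtain ⟨a, rfl⟩ := natDegree_eq_zero.mp h0
    simp only [C_comp, sub_self, degree_zero]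
    exact bot_lt_iff_ne_bot.mpr (by simpa [degree_eq_bot] using hP)
  · have hX : ((X + 1 : ℝ[X])).natDegree = 1 := by
      simpa using natDegree_X_add_C (1 : ℝ)
    have hlc : (P.comp (X + 1)).leadingCoeff = P.leadingCoeff := by
      rw [leadingCoeff_comp (by rw [hX]; exact one_ne_zero)]
      have : (X + 1 : ℝ[X]).leadingCoeff = 1 := by
        simpa using (monic_X_add_C (1 : ℝ)).leadingCoeff
      simp [this]
    have hcomp_ne : P.comp (X + 1) ≠ 0 := by
      intro h
      apply hP
      have := hlc
      rw [h, leadingCoeff_zero] at this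
      exact leadingCoeff_eq_zero.mp this.symm
    have hdeg : (P.comp (X + 1)).degree = P.degree := by
      rw [degree_eq_natDegree hcomp_ne, degree_eq_natDegree hP,
        natDegree_comp, hX, mul_one]
    calc (P.comp (X + 1) - P).degree < (P.comp (X + 1)).degree :=
          degree_sub_lt hdeg hcomp_ne hlc
      _ = P.degree := hdeg

lemma iter_fwdDiff_poly (n : ℕ) (P : ℝ[X]) (hdeg : P.degree < n) :
    (fwdDiff (1 : ℕ))^[n] (fun k : ℕ => P.eval (k : ℝ)) = 0 := by
  induction n generalizing P with
  | zero =>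
    have : P = 0 := by
      rw [← degree_eq_bot]
      exact Nat.WithBot.lt_zero_iff.mp (by exact_mod_cast hdeg)
    subst this
    funext k; simp
  | succ n ih =>
    rw [Function.iterate_succ_apply]
    have hstep : fwdDiff (1 : ℕ) (fun k : ℕ => P.eval (k : ℝ))
        = fun k : ℕ => (P.comp (X + 1) - P).eval (k : ℝ) := by
      funext k
      simp only [fwdDiff, eval_sub, eval_comp, eval_add, eval_X, eval_one]
      push_cast
      ring
    rw [hstep]
    apply ih
    rcases eq_or_ne P 0 with rfl | hP
    · simp only [zero_comp, sub_zero, degree_zero]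
      exact_mod_cast WithBot.bot_lt_coe (n : ℕ)
    rcases eq_or_ne (P.comp (X + 1) - P) 0 with hQ | hQ
    · rw [hQ, degree_zero]; exact_mod_cast WithBot.bot_lt_coe (n : ℕ)
    · have h1 : (P.comp (X + 1) - P).degree < P.degree := degree_comp_sub_lt P hP
      have h2 : P.natDegree < n + 1 := (natDegree_lt_iff_degree_lt hP).mpr hdeg
      have h3 : (P.comp (X + 1) - P).natDegree < P.natDegree :=
        natDegree_lt_natDegree hQ h1
      exact (natDegree_lt_iff_degree_lt hQ).mp (by omega)

lemma alt_sum_poly (n : ℕ) (P : ℝ[X]) (hdeg : P.degree < n) :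
    ∑ k ∈ range (n + 1), ((-1 : ℝ)) ^ (n - k) * (n.choose k : ℝ) * P.eval (k : ℝ) = 0 := by
  have h := congrFun (iter_fwdDiff_poly n P hdeg) 0
  rw [fwdDiff_iter_eq_sum_shift] at h
  simp only [Pi.zero_apply, zero_add, smul_eq_mul, mul_one] at h
  rw [← h]
  apply Finset.sum_congr rfl
  intro k _
  rw [zsmul_eq_mul]
  push_cast
  ring_nf

lemma alt_sum_affine_pow (M : ℝ) (n : ℕ) (hn : 1 ≤ n) :
    ∑ k ∈ range (n + 1), ((-1 : ℝ)) ^ (n - k) * (n.choose k : ℝ)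
      * ((k : ℝ) * M + 1) ^ (n - 1) = 0 := by
  have h := alt_sum_poly n ((C M * X + 1) ^ (n - 1)) ?_
  · rw [← h]
    apply Finset.sum_congr rfl
    intro k _
    rw [eval_pow]
    simp only [eval_add, eval_mul, eval_C, eval_X, eval_one]
    ring
  · calc ((C M * X + 1 : ℝ[X]) ^ (n - 1)).degree ≤ (n - 1) • (C M * X + 1 : ℝ[X]).degree :=
          degree_pow_le _ _
      _ ≤ (n - 1) • (1 : WithBot ℕ) := by
          apply nsmul_le_nsmul_right
          exact (degree_add_le _ _).trans
            (max_le (degree_C_mul_X_le M) (degree_one.le.trans (by norm_num)))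
      _ < n := by
          rw [nsmul_eq_mul, mul_one]
          exact_mod_cast Nat.sub_lt hn one_pos


open Real

noncomputable def bco (M : ℝ) (k : ℕ) : ℝ :=
  ((k : ℝ) * M + 1) ^ (k - 1) / (M ^ k * (Nat.factorial k : ℝ))

lemma bco_nonneg {M : ℝ} (hM : 1 ≤ M) (k : ℕ) : 0 ≤ bco M k := by
  have h0 : (0:ℝ) < M := lt_of_lt_of_le one_pos hM
  unfold bco
  positivity

lemma pow_div_factorial_le_exp {x : ℝ} (hx : 0 ≤ x) (n : ℕ) :
    x ^ n / (n.factorial : ℝ) ≤ Real.exp x := by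
  calc x ^ n / (n.factorial : ℝ)
      ≤ ∑ i ∈ range (n + 1), x ^ i / (i.factorial : ℝ) := by
        exact Finset.single_le_sum (f := fun i => x ^ i / (i.factorial : ℝ))
          (fun i _ => by positivity) (self_mem_range_succ n)
    _ ≤ Real.exp x := Real.sum_le_exp_of_nonneg hx _

lemma bco_le {M : ℝ} (hM : 1 ≤ M) (k : ℕ) :
    bco M k ≤ ((k : ℝ) + 1) ^ (k - 1) / (Nat.factorial k : ℝ) := by
  have h0 : (0:ℝ) < M := lt_of_lt_of_le one_pos hM
  have h1 : ((k : ℝ) * M + 1) ^ (k - 1) ≤ (((k:ℝ) + 1) * M) ^ (k - 1) := by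
    apply pow_le_pow_left₀ (by positivity)
    nlinarith
  have h2 : (((k:ℝ) + 1) * M) ^ (k - 1) = ((k:ℝ)+1)^(k-1) * M ^ (k-1) := mul_pow _ _ _
  have h3 : M ^ (k - 1) ≤ M ^ k := pow_le_pow_right₀ hM (Nat.sub_le k 1)
  unfold bco
  rw [div_le_div_iff₀ (by positivity) (by positivity)]
  calc ((k : ℝ) * M + 1) ^ (k - 1) * (Nat.factorial k : ℝ)
      ≤ ((k:ℝ)+1)^(k-1) * M ^ k * (Nat.factorial k : ℝ) := by
        apply mul_le_mul_of_nonneg_right _ (by positivity)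
        calc ((k : ℝ) * M + 1) ^ (k - 1) ≤ ((k:ℝ)+1)^(k-1) * M ^ (k-1) := by
              rw [← h2]; exact h1
          _ ≤ ((k:ℝ)+1)^(k-1) * M ^ k := by
              apply mul_le_mul_of_nonneg_left h3 (by positivity)
    _ = ((k:ℝ)+1)^(k-1) * (M ^ k * (Nat.factorial k : ℝ)) := by ring

lemma bco_radius_bound {M : ℝ} (hM : 1 ≤ M) (k : ℕ) :
    bco M k * ((Real.exp 1)⁻¹) ^ k ≤ Real.exp 1 := by
  have he : (0:ℝ) < Real.exp 1 := Real.exp_pos 1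
  have h1 : bco M k ≤ ((k : ℝ) + 1) ^ k / (Nat.factorial k : ℝ) := by
    refine (bco_le hM k).trans ?_
    apply div_le_div_of_nonneg_right _ (by positivity)
    · exact pow_le_pow_right₀ (le_add_of_nonneg_left (Nat.cast_nonneg k)) (Nat.sub_le k 1)
  have h2 : ((k : ℝ) + 1) ^ k / (Nat.factorial k : ℝ) ≤ Real.exp 1 ^ (k+1) := by
    have h3 : ((k:ℝ)+1) ^ (k+1) / ((k+1).factorial : ℝ) ≤ Real.exp ((k:ℝ)+1) :=
      pow_div_factorial_le_exp (by positivity) (k+1)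
    have h4 : Real.exp ((k:ℝ)+1) = Real.exp 1 ^ (k+1) := by
      rw [← Real.exp_nat_mul]; norm_num
    rw [← h4]
    refine le_of_eq_of_le ?_ h3
    rw [Nat.factorial_succ]
    push_cast
    rw [pow_succ]
    have hk : ((k:ℝ) + 1) ≠ 0 := by positivity
    have hf : (Nat.factorial k : ℝ) ≠ 0 := by
      exact_mod_cast Nat.factorial_ne_zero k
    field_simp
  calc bco M k * ((Real.exp 1)⁻¹) ^ k ≤ Real.exp 1 ^ (k+1) * ((Real.exp 1)⁻¹) ^ k := by
        apply mul_le_mul_of_nonneg_right (h1.trans h2) (by positivity)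
    _ = Real.exp 1 := by
        rw [inv_pow, pow_succ]
        field_simp

lemma stirling_lower (n : ℕ) (hn : 1 ≤ n) :
    Real.sqrt (n : ℝ) * ((n : ℝ) / Real.exp 1) ^ n ≤ (n.factorial : ℝ) := by
  obtain ⟨m, rfl⟩ := Nat.exists_eq_add_of_le hn
  have h1 : Real.sqrt π ≤ Stirling.stirlingSeq (1 + m) := by
    have := Stirling.stirlingSeq'_antitone
    have htd : Filter.Tendsto (Stirling.stirlingSeq ∘ Nat.succ) Filter.atTop (nhds (Real.sqrt π)) :=
      Stirling.tendsto_stirlingSeq_sqrt_pi.comp (Filter.tendsto_add_atTop_nat 1)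
    have := Stirling.stirlingSeq'_antitone.le_of_tendsto htd m
    simpa [Nat.succ_eq_add_one, Nat.add_comm] using this
  set n := 1 + m with hn'
  have hnp : (0:ℝ) < (n:ℝ) := by positivity
  have hD : (0:ℝ) < Real.sqrt (2 * n) * ((n : ℝ) / Real.exp 1) ^ n := by
    apply mul_pos (Real.sqrt_pos.mpr (by positivity)) (pow_pos (by positivity) n)
  have h2 : Real.sqrt π * (Real.sqrt (2 * n) * ((n : ℝ) / Real.exp 1) ^ n) ≤ n.factorial := by
    rw [Stirling.stirlingSeq] at h1
    calc Real.sqrt π * (Real.sqrt (2 * n) * ((n : ℝ) / Real.exp 1) ^ n)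
        ≤ ((n.factorial : ℝ) / (Real.sqrt (2 * n) * ((n : ℝ) / Real.exp 1) ^ n))
            * (Real.sqrt (2 * n) * ((n : ℝ) / Real.exp 1) ^ n) := by
          exact mul_le_mul_of_nonneg_right h1 hD.le
      _ = (n.factorial : ℝ) := by field_simp
  refine le_trans ?_ h2
  rw [← mul_assoc]
  apply mul_le_mul_of_nonneg_right _ (pow_nonneg (by positivity) n)
  calc Real.sqrt (n:ℝ) = 1 * Real.sqrt (n:ℝ) := (one_mul _).symm
    _ ≤ Real.sqrt π * Real.sqrt (2*n) := by
        apply mul_le_mul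
        · rw [show (1:ℝ) = Real.sqrt 1 by simp]
          exact Real.sqrt_le_sqrt (by linarith [Real.pi_gt_three])
        · exact Real.sqrt_le_sqrt (by linarith)
        · positivity
        · positivity

lemma one_add_inv_pow_le (k : ℕ) (hk : 1 ≤ k) :
    (1 + 1 / (k:ℝ)) ^ k ≤ Real.exp 1 := by
  have hkp : (0:ℝ) < k := by exact_mod_cast hk
  calc (1 + 1/(k:ℝ)) ^ k ≤ Real.exp (1/(k:ℝ)) ^ k := by
        apply pow_le_pow_left₀ (by positivity)
        linarith [Real.add_one_le_exp (1/(k:ℝ))]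
    _ = Real.exp ((k:ℝ) * (1/(k:ℝ))) := (Real.exp_nat_mul _ k).symm
    _ = Real.exp 1 := by rw [mul_one_div, div_self (ne_of_gt hkp)]

lemma bco_boundary_summable {M : ℝ} (hM : 1 ≤ M) :
    Summable (fun k : ℕ => bco M k * ((Real.exp 1)⁻¹) ^ k) := by
  rw [← summable_nat_add_iff 1]
  have hsum : Summable (fun k : ℕ => Real.exp 1 * (1 / ((k:ℝ)+1) ^ ((3:ℝ)/2))) := by
    apply Summable.mul_left
    have := (Real.summable_one_div_nat_rpow (p := (3:ℝ)/2)).mpr (by norm_num)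
    exact_mod_cast (summable_nat_add_iff 1).mpr this
  apply Summable.of_nonneg_of_le _ _ hsum
  · intro k
    exact mul_nonneg (bco_nonneg hM _) (by positivity)
  · intro j
    set k := j + 1 with hkdef
    have hk : 1 ≤ k := Nat.le_add_left 1 j
    have hkp : (0:ℝ) < (k:ℝ) := by exact_mod_cast hk
    have he : (0:ℝ) < Real.exp 1 := Real.exp_pos 1
    -- bco M k * e⁻¹^k ≤ e / (k^(3/2))
    have hb : bco M k ≤ ((k:ℝ)+1) ^ (k-1) / (Nat.factorial k : ℝ) := bco_le hM k
    have hfac : Real.sqrt (k:ℝ) * ((k:ℝ)/Real.exp 1)^k ≤ (Nat.factorial k : ℝ) :=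
      stirling_lower k hk
    have hpow : ((k:ℝ)+1) ^ (k-1) ≤ Real.exp 1 * (k:ℝ) ^ (k-1) := by
      have h1 : ((k:ℝ)+1) ^ (k-1) = (1 + 1/(k:ℝ))^(k-1) * (k:ℝ)^(k-1) := by
        rw [← mul_pow]
        congr 1
        field_simp
      rw [h1]
      apply mul_le_mul_of_nonneg_right _ (by positivity)
      calc (1 + 1/(k:ℝ))^(k-1) ≤ (1 + 1/(k:ℝ))^k :=
            pow_le_pow_right₀ (le_add_of_nonneg_right (by positivity)) (Nat.sub_le k 1)
        _ ≤ Real.exp 1 := one_add_inv_pow_le k hk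
    have hD : (0:ℝ) < Real.sqrt (k:ℝ) * ((k:ℝ)/Real.exp 1)^k := by positivity
    have key : bco M k * ((Real.exp 1)⁻¹) ^ k ≤ Real.exp 1 / ((k:ℝ) * Real.sqrt (k:ℝ)) := by
      have hfp : (0:ℝ) < (Nat.factorial k : ℝ) := by
        exact_mod_cast Nat.factorial_pos k
      calc bco M k * ((Real.exp 1)⁻¹) ^ k
          ≤ (((k:ℝ)+1) ^ (k-1) / (Nat.factorial k : ℝ)) * ((Real.exp 1)⁻¹) ^ k := by
            apply mul_le_mul_of_nonneg_right hb (by positivity)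
        _ ≤ ((Real.exp 1 * (k:ℝ) ^ (k-1)) / (Real.sqrt (k:ℝ) * ((k:ℝ)/Real.exp 1)^k))
              * ((Real.exp 1)⁻¹) ^ k := by
            apply mul_le_mul_of_nonneg_right _ (by positivity)
            apply div_le_div₀ (by positivity) hpow hD hfac
        _ = Real.exp 1 * ((k:ℝ) ^ (k-1) / (k:ℝ)^k) / Real.sqrt (k:ℝ) := by
            rw [div_pow, inv_pow]
            field_simp
        _ = Real.exp 1 / ((k:ℝ) * Real.sqrt (k:ℝ)) := by
            have : (k:ℝ) ^ (k-1) / (k:ℝ)^k = ((k:ℝ))⁻¹ := by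
              rw [show k = (k-1) + 1 by omega, pow_succ]
              have : (k:ℝ) ^ (k-1) ≠ 0 := by positivity
              field_simp
              simp
            rw [this]
            field_simp
    refine key.trans (le_of_eq ?_)
    rw [mul_one_div]
    congr 1
    rw [show ((j:ℝ)+1) = ((k:ℝ)) by push_cast [hkdef]; ring]
    rw [show ((3:ℝ)/2) = 1 + 1/2 by norm_num, Real.rpow_add hkp, Real.rpow_one,
      Real.sqrt_eq_rpow]

open FormalMultilinearSeries in
noncomputable def pser (M : ℝ) : FormalMultilinearSeries ℝ ℝ ℝ :=
  FormalMultilinearSeries.ofScalars ℝ (bco M)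

lemma pser_radius {M : ℝ} (hM : 1 ≤ M) :
    (ENNReal.ofReal ((Real.exp 1)⁻¹)) ≤ (pser M).radius := by
  have he : (0:ℝ) ≤ (Real.exp 1)⁻¹ := by positivity
  rw [show ENNReal.ofReal ((Real.exp 1)⁻¹) = ((Real.toNNReal ((Real.exp 1)⁻¹) : NNReal) : ENNReal)
    from rfl]
  apply (pser M).le_radius_of_bound (Real.exp 1)
  intro n
  have h1 : ‖pser M n‖ = |bco M n| := by
    rw [pser, FormalMultilinearSeries.ofScalars_norm]
    rfl
  rw [h1, abs_of_nonneg (bco_nonneg hM n)]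
  have h2 : ((Real.toNNReal ((Real.exp 1)⁻¹) : NNReal) : ℝ) = (Real.exp 1)⁻¹ :=
    Real.coe_toNNReal _ he
  rw [h2]
  exact bco_radius_bound hM n

noncomputable def hsum (M : ℝ) (z : ℝ) : ℝ := ∑' k : ℕ, bco M k * z ^ k

lemma pser_sum_eq (M : ℝ) (z : ℝ) : (pser M).sum z = hsum M z := by
  rw [FormalMultilinearSeries.sum, hsum]
  congr 1
  funext n
  rw [pser, FormalMultilinearSeries.ofScalars_apply_eq, smul_eq_mul]

lemma hsum_analyticAt {M : ℝ} (hM : 1 ≤ M) {z : ℝ} (hz : |z| < (Real.exp 1)⁻¹) :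
    AnalyticAt ℝ (hsum M) z := by
  have hrad : 0 < (pser M).radius :=
    lt_of_lt_of_le (by simp [ENNReal.ofReal_pos, Real.exp_pos]) (pser_radius hM)
  have hball := (pser M).hasFPowerSeriesOnBall hrad
  have hz' : z ∈ Metric.eball (0:ℝ) (pser M).radius := by
    rw [Metric.mem_eball, edist_zero_right]
    calc (‖z‖₊ : ENNReal) < ENNReal.ofReal ((Real.exp 1)⁻¹) := by
          rw [← ENNReal.ofReal_coe_nnreal]
          apply ENNReal.ofReal_lt_ofReal_iff_of_nonneg (by positivity) |>.mpr
          simpa [coe_nnnorm, Real.norm_eq_abs] using hz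
      _ ≤ (pser M).radius := pser_radius hM
  have := hball.analyticAt_of_mem hz'
  exact this.congr (by
    filter_upwards with w using (pser_sum_eq M w))

lemma hsum_continuousOn {M : ℝ} (hM : 1 ≤ M) :
    ContinuousOn (hsum M) (Set.Icc 0 ((Real.exp 1)⁻¹)) := by
  have hunif := tendstoUniformlyOn_tsum (bco_boundary_summable hM)
    (f := fun (k : ℕ) (x : ℝ) => bco M k * x ^ k)
    (s := Set.Icc 0 ((Real.exp 1)⁻¹)) ?_
  · apply hunif.continuousOn
    refine Filter.Eventually.frequently ?_
    filter_upwards with t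
    exact continuousOn_finset_sum t fun k _ => (continuous_const.mul (continuous_pow k)).continuousOn
  · intro k x hx
    rw [Real.norm_eq_abs, abs_mul, abs_of_nonneg (bco_nonneg hM k), abs_pow]
    apply mul_le_mul_of_nonneg_left _ (bco_nonneg hM k)
    apply pow_le_pow_left₀ (abs_nonneg x)
    rw [abs_of_nonneg hx.1]
    exact hx.2

lemma f_eq_hsum {M : ℝ} (hM : 1 ≤ M) (c : ℝ) :
    f M c = hsum M (c * Real.exp (-c)) * Real.exp (-(c / M)) := by
  have hM0 : M ≠ 0 := by linarith
  rw [f, hsum, ← tsum_mul_right]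
  congr 1
  funext k
  have hexp : Real.exp (-c) ^ k * Real.exp (-(c / M)) =
      Real.exp (-c * ((k : ℝ) * M + 1) / M) := by
    rw [← Real.exp_nat_mul, ← Real.exp_add]
    congr 1
    field_simp
    ring
  rw [bco, mul_pow, ← hexp]
  have hfac : (Nat.factorial k : ℝ) ≠ 0 := by exact_mod_cast Nat.factorial_ne_zero k
  have hMk : M ^ k ≠ 0 := pow_ne_zero k hM0
  field_simp

lemma real_exp_tsum (x : ℝ) : Real.exp x = ∑' n : ℕ, x ^ n / (n.factorial : ℝ) := by
  rw [Real.exp_eq_exp_ℝ, NormedSpace.exp_eq_tsum_div]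

lemma f_small {M : ℝ} (hM : 1 ≤ M) {c : ℝ} (hc0 : 0 < c) (hc : c ≤ 1/8) :
    f M c = 1 := by
  have hM0 : (0:ℝ) < M := lt_of_lt_of_le one_pos hM
  have hc1 : c ≤ 1 := by linarith
  set F : ℕ × ℕ → ℝ := fun p =>
    (((p.1:ℝ) * M + 1) ^ (p.1 - 1) * c ^ p.1 / (M ^ p.1 * ((p.1).factorial : ℝ))) *
      ((-c * ((p.1:ℝ) * M + 1) / M) ^ p.2 / ((p.2).factorial : ℝ)) with hF
  have hB : ∀ k : ℕ, 0 ≤ ((k:ℝ) * M + 1) ^ (k - 1) * c ^ k / (M ^ k * (k.factorial : ℝ)) := by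
    intro k; positivity
  have habs : ∀ p : ℕ × ℕ, |F p| =
      (((p.1:ℝ) * M + 1) ^ (p.1 - 1) * c ^ p.1 / (M ^ p.1 * ((p.1).factorial : ℝ))) *
        ((c * ((p.1:ℝ) * M + 1) / M) ^ p.2 / ((p.2).factorial : ℝ)) := by
    intro p
    have h1 : -c * ((p.1:ℝ) * M + 1) / M = -(c * ((p.1:ℝ) * M + 1) / M) := by ring
    rw [hF]
    simp only []
    rw [abs_mul, abs_of_nonneg (hB p.1), abs_div, abs_pow, h1, abs_neg,
      abs_of_nonneg (by positivity : (0:ℝ) ≤ c * ((p.1:ℝ) * M + 1) / M),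
      abs_of_nonneg (by positivity : (0:ℝ) ≤ ((p.2).factorial : ℝ))]
  -- summability of |F|
  have hinner : ∀ k : ℕ, Summable (fun j => |F (k, j)|) := by
    intro k
    simp only [habs]
    exact (Real.summable_pow_div_factorial _).mul_left _
  have houter : Summable (fun k : ℕ => ∑' j, |F (k, j)|) := by
    have hval : ∀ k : ℕ, ∑' j, |F (k, j)| =
        (((k:ℝ) * M + 1) ^ (k - 1) * c ^ k / (M ^ k * (k.factorial : ℝ))) *
          Real.exp (c * ((k:ℝ) * M + 1) / M) := by
      intro k
      simp only [habs]
      rw [tsum_mul_left, ← real_exp_tsum]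
    have hq0 : (0:ℝ) ≤ c * Real.exp 1 ^ 2 := by positivity
    have hq1 : c * Real.exp 1 ^ 2 < 1 := by
      have h1 : Real.exp 1 < 2.7182818286 := Real.exp_one_lt_d9
      nlinarith [Real.exp_pos 1]
    apply Summable.of_nonneg_of_le (fun k => ?_) (fun k => ?_)
      ((summable_geometric_of_lt_one hq0 hq1).mul_left (Real.exp 1 ^ 2))
    · rw [hval]; positivity
    · rw [hval]
      have hbco : ((k:ℝ) * M + 1) ^ (k - 1) / (M ^ k * (k.factorial : ℝ))
          ≤ Real.exp 1 * Real.exp 1 ^ k := by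
        have h2 := bco_radius_bound hM k
        have h3 : bco M k = bco M k * ((Real.exp 1)⁻¹) ^ k * Real.exp 1 ^ k := by
          rw [inv_pow]; field_simp
        calc ((k:ℝ) * M + 1) ^ (k - 1) / (M ^ k * (k.factorial : ℝ)) = bco M k := rfl
          _ = bco M k * ((Real.exp 1)⁻¹) ^ k * Real.exp 1 ^ k := h3
          _ ≤ Real.exp 1 * Real.exp 1 ^ k := by
              apply mul_le_mul_of_nonneg_right h2 (by positivity)
      have hexp : Real.exp (c * ((k:ℝ) * M + 1) / M) ≤ Real.exp 1 * Real.exp 1 ^ k := by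
        rw [← Real.exp_nat_mul, ← Real.exp_add]
        apply Real.exp_le_exp.mpr
        have h4 : c * ((k:ℝ) * M + 1) / M = c * k + c / M := by field_simp
        rw [h4]
        have h5 : c * k ≤ (k:ℝ) := by
          apply mul_le_of_le_one_left (Nat.cast_nonneg k) hc1
        have h6 : c / M ≤ 1 := by
          rw [div_le_one hM0]; linarith
        linarith
      calc ((k:ℝ) * M + 1) ^ (k - 1) * c ^ k / (M ^ k * (k.factorial : ℝ)) *
            Real.exp (c * ((k:ℝ) * M + 1) / M)
          = (((k:ℝ) * M + 1) ^ (k - 1) / (M ^ k * (k.factorial : ℝ))) *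
              Real.exp (c * ((k:ℝ) * M + 1) / M) * c ^ k := by ring
        _ ≤ (Real.exp 1 * Real.exp 1 ^ k) * (Real.exp 1 * Real.exp 1 ^ k) * c ^ k := by
            apply mul_le_mul_of_nonneg_right _ (by positivity)
            apply mul_le_mul hbco hexp (by positivity) (by positivity)
        _ = Real.exp 1 ^ 2 * (c * Real.exp 1 ^ 2) ^ k := by
            rw [mul_pow]; ring
  have habs_sum : Summable (fun p : ℕ × ℕ => |F p|) :=
    (summable_prod_of_nonneg (fun p => abs_nonneg _)).mpr ⟨hinner, houter⟩
  have hFsum : Summable F := habs_sum.of_abs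
  -- f M c = ∑' p, F p
  have hfF : f M c = ∑' p : ℕ × ℕ, F p := by
    rw [f, Summable.tsum_prod hFsum]
    apply tsum_congr
    intro k
    have : ∑' j : ℕ, F (k, j) =
        (((k:ℝ) * M + 1) ^ (k - 1) * c ^ k / (M ^ k * ((k).factorial : ℝ))) *
          Real.exp (-c * ((k:ℝ) * M + 1) / M) := by
      rw [hF]
      simp only []
      rw [tsum_mul_left, ← real_exp_tsum]
    rw [this]
    ring
  -- diagonal evaluation
  have hdiag : ∑' p : ℕ × ℕ, F p = 1 := by
    rw [← Finset.HasAntidiagonal.sigmaAntidiagonalEquivProd.tsum_eq F]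
    have hsig : Summable (F ∘ Finset.HasAntidiagonal.sigmaAntidiagonalEquivProd) :=
      Finset.HasAntidiagonal.sigmaAntidiagonalEquivProd.summable_iff.mpr hFsum
    rw [show (fun x : (n : ℕ) × {p // p ∈ Finset.HasAntidiagonal.antidiagonal n} =>
      F (Finset.HasAntidiagonal.sigmaAntidiagonalEquivProd x)) = F ∘ Finset.HasAntidiagonal.sigmaAntidiagonalEquivProd from rfl]
    rw [Summable.tsum_sigma hsig]
    have hn : ∀ n : ℕ, ∑' (q : {p // p ∈ Finset.HasAntidiagonal.antidiagonal n}),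
        (F ∘ Finset.HasAntidiagonal.sigmaAntidiagonalEquivProd) ⟨n, q⟩ = if n = 0 then 1 else 0 := by
      intro n
      have hsub : ∑' (q : {p // p ∈ Finset.HasAntidiagonal.antidiagonal n}),
          (F ∘ Finset.HasAntidiagonal.sigmaAntidiagonalEquivProd) ⟨n, q⟩
          = ∑ p ∈ Finset.HasAntidiagonal.antidiagonal n, F p := by
        exact Finset.tsum_subtype _ F
      rw [hsub, Finset.Nat.sum_antidiagonal_eq_sum_range_succ_mk]
      rcases Nat.eq_zero_or_pos n with rfl | hnpos
      · simp [hF]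
      · rw [if_neg (Nat.pos_iff_ne_zero.mp hnpos)]
        have key := alt_sum_affine_pow M n hnpos
        have hstep : ∀ k ∈ Finset.range (n + 1), F (k, n - k) =
            (c ^ n / (M ^ n * (n.factorial : ℝ))) *
              ((-1 : ℝ) ^ (n - k) * (n.choose k : ℝ) * ((k:ℝ) * M + 1) ^ (n - 1)) := by
          intro k hk
          have hkn : k ≤ n := Nat.lt_succ_iff.mp (Finset.mem_range.mp hk)
          have hApos : (0:ℝ) < (k:ℝ) * M + 1 := by positivity
          have hAexp : ((k:ℝ) * M + 1) ^ (k - 1) * ((k:ℝ) * M + 1) ^ (n - k)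
              = ((k:ℝ) * M + 1) ^ (n - 1) := by
            rcases Nat.eq_zero_or_pos k with rfl | hkpos
            · norm_num
            · rw [← pow_add]; congr 1; omega
          have hc2 : c ^ k * c ^ (n - k) = c ^ n := by
            rw [← pow_add]; congr 1; omega
          have hM2 : M ^ k * M ^ (n - k) = M ^ n := by
            rw [← pow_add]; congr 1; omega
          have hch : ((n.choose k : ℝ)) * (k.factorial : ℝ) * (((n - k).factorial : ℝ))
              = (n.factorial : ℝ) := by
            exact_mod_cast Nat.choose_mul_factorial_mul_factorial hkn
          have hneg : (-c * ((k:ℝ) * M + 1) / M) ^ (n - k)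
              = (-1 : ℝ) ^ (n - k) * (c ^ (n - k) * ((k:ℝ) * M + 1) ^ (n - k) / M ^ (n - k)) := by
            have h1 : -c * ((k:ℝ) * M + 1) / M = -(c * ((k:ℝ) * M + 1) / M) := by ring
            rw [h1, neg_pow, div_pow, mul_pow]
          have hchpos : (0:ℝ) < (n.choose k : ℝ) := by
            exact_mod_cast Nat.choose_pos hkn
          rw [hF]
          simp only []
          rw [hneg, ← hch]
          have hfk : ((k.factorial : ℝ)) ≠ 0 := by exact_mod_cast Nat.factorial_ne_zero k
          have hfnk : (((n - k).factorial : ℝ)) ≠ 0 := by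
            exact_mod_cast Nat.factorial_ne_zero (n - k)
          field_simp
          rw [← hAexp, ← hc2, ← hM2]
          ring
        rw [Finset.sum_congr rfl hstep, ← Finset.mul_sum, key, mul_zero]
    rw [tsum_congr hn]
    rw [tsum_eq_single 0 (fun b hb => if_neg hb)]
    simp
  rw [hfF, hdiag]

theorem f_eq_one_subcritical (m : ℕ) (hm : 0 < m) (c : ℝ) (hc0 : 0 < c) (hc1 : c ≤ 1) :
    f (m : ℝ) c = 1 := by
  set M : ℝ := (m : ℝ) with hMdef
  have hM : 1 ≤ M := by rw [hMdef]; exact_mod_cast hm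
  have hM0 : (0:ℝ) < M := lt_of_lt_of_le one_pos hM
  set g : ℝ → ℝ := fun t => hsum M (t * Real.exp (-t)) * Real.exp (-(t / M)) with hg
  have hfg : ∀ t : ℝ, f M t = g t := fun t => f_eq_hsum hM t
  -- key inequality : for t ∈ (0,1), t e^{-t} < e⁻¹ ; for t ∈ [0,1], ≤
  have hle : ∀ t : ℝ, 0 ≤ t → t ≤ 1 → t * Real.exp (-t) ≤ (Real.exp 1)⁻¹ := by
    intro t ht0 ht1
    have h1 : t ≤ Real.exp (t - 1) := by
      have := Real.add_one_le_exp (t - 1)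
      linarith
    calc t * Real.exp (-t) ≤ Real.exp (t - 1) * Real.exp (-t) :=
          mul_le_mul_of_nonneg_right h1 (Real.exp_pos _).le
      _ = (Real.exp 1)⁻¹ := by
          rw [← Real.exp_add, ← Real.exp_neg]; congr 1; ring
  have hlt : ∀ t : ℝ, 0 ≤ t → t < 1 → t * Real.exp (-t) < (Real.exp 1)⁻¹ := by
    intro t ht0 ht1
    have h1 : t < Real.exp (t - 1) := by
      have := Real.add_one_lt_exp (x := t - 1) (by intro h; apply absurd (by linarith : t = 1); linarith)
      linarith
    calc t * Real.exp (-t) < Real.exp (t - 1) * Real.exp (-t) := by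
          apply mul_lt_mul_of_pos_right h1 (Real.exp_pos _)
      _ = (Real.exp 1)⁻¹ := by
          rw [← Real.exp_add, ← Real.exp_neg]; congr 1; ring
  -- analyticity of g on Ioo 0 1
  have han : AnalyticOnNhd ℝ g (Set.Ioo 0 1) := by
    intro t ht
    have a1 : AnalyticAt ℝ (fun s : ℝ => s * Real.exp (-s)) t := by
      apply analyticAt_id.mul
      exact AnalyticAt.rexp (analyticAt_id.neg)
    have a2 : AnalyticAt ℝ (hsum M) (t * Real.exp (-t)) := by
      apply hsum_analyticAt hM
      rw [abs_of_nonneg (mul_nonneg ht.1.le (Real.exp_pos _).le)]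
      exact hlt t ht.1.le ht.2
    have a3 : AnalyticAt ℝ (fun s : ℝ => Real.exp (-(s / M))) t := by
      apply AnalyticAt.rexp
      exact (analyticAt_id.div analyticAt_const (ne_of_gt hM0)).neg
    have a4 : AnalyticAt ℝ (fun s : ℝ => hsum M (s * Real.exp (-s))) t := AnalyticAt.comp (f := fun s : ℝ => s * Real.exp (-s)) a2 a1
    exact a4.mul a3
  have hEq : Set.EqOn g (fun _ => (1:ℝ)) (Set.Ioo 0 1) := by
    apply han.eqOn_of_preconnected_of_eventuallyEq analyticOnNhd_const isPreconnected_Ioo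
      (z₀ := 1/16) (by constructor <;> norm_num)
    have hmem : Set.Ioo (0:ℝ) (1/8) ∈ nhds (1/16 : ℝ) :=
      Ioo_mem_nhds (by norm_num) (by norm_num)
    filter_upwards [hmem] with t ht
    rw [← hfg t]
    exact f_small hM ht.1 ht.2.le
  -- continuity of g on Icc 0 1
  have hcont : ContinuousOn g (Set.Icc 0 1) := by
    apply ContinuousOn.mul
    · apply (hsum_continuousOn hM).comp
      · exact (continuous_id.mul (Real.continuous_exp.comp continuous_neg)).continuousOn
      · intro t ht
        exact ⟨by have := ht.1; positivity, hle t ht.1 ht.2⟩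
    · exact (Real.continuous_exp.comp (continuous_id.div_const M).neg).continuousOn
  rcases lt_or_eq_of_le hc1 with hlt1 | rfl
  · rw [hfg c]
    exact hEq ⟨hc0, hlt1⟩
  · rw [hfg 1]
    have hclos : (1:ℝ) ∈ closure (Set.Ioo (0:ℝ) 1) := by
      rw [closure_Ioo (by norm_num : (0:ℝ) ≠ 1)]
      exact ⟨by norm_num, le_refl 1⟩
    have hne : (nhdsWithin (1:ℝ) (Set.Ioo (0:ℝ) 1)).NeBot :=
      mem_closure_iff_nhdsWithin_neBot.mp hclos
    have h1 : Filter.Tendsto g (nhdsWithin (1:ℝ) (Set.Ioo (0:ℝ) 1)) (nhds (g 1)) := by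
      apply (hcont.continuousWithinAt (by constructor <;> norm_num)).mono_left
      apply nhdsWithin_mono
      exact Set.Ioo_subset_Icc_self
    have h2 : Filter.Tendsto g (nhdsWithin (1:ℝ) (Set.Ioo (0:ℝ) 1)) (nhds 1) := by
      apply Filter.Tendsto.congr' _ tendsto_const_nhds
      filter_upwards [self_mem_nhdsWithin] with t ht
      exact (hEq ht).symm
    exact tendsto_nhds_unique h1 h2
end
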